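/- arXiv:1703.02908 — 5 statements merged into one kernel-verified Lean document; each statement's English description precedes it below -/
import Mathlib

section
/- Let α ∈ (0,2) and s ∈ (0,2). Define G_s(x) = (1/π) ∫_0^∞ cos(xξ) e^{-ξ^α} ξ^s dξ (which equals ((-Δ)^{s/2} K_1^α)(x)). Then there exists a constant C (depending on α and s) such that |G_s(x)| ≤ C |x|^{-(s+1)} for all x with |x| ≥ 1. -/
open MeasureTheory Real Set Filter
open Topology

namespace GfunAux

/-- kernel monomial `ξ^β e^{-ξ^α}` -/
noncomputable def En (α β ξ : ℝ) : ℝ := ξ ^ β * Real.exp (-ξ ^ α)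

lemma En_nonneg (α β : ℝ) {ξ : ℝ} (hξ : 0 ≤ ξ) : 0 ≤ En α β ξ :=
  mul_nonneg (Real.rpow_nonneg hξ β) (Real.exp_pos _).le

lemma pow_mul_exp_neg_le (n : ℕ) {t : ℝ} (ht : 0 ≤ t) :
    t ^ n * Real.exp (-t) ≤ n.factorial := by
  have h1 : t ^ n / n.factorial ≤ Real.exp t := by
    have := Real.sum_le_exp_of_nonneg ht (n + 1)
    refine le_trans ?_ this
    refine Finset.single_le_sum (f := fun i => t ^ i / i.factorial) ?_ ?_
    · intro i _
      positivity
    · exact Finset.self_mem_range_succ n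
  rw [Real.exp_neg, mul_inv_le_iff₀ (Real.exp_pos t)]
  rw [div_le_iff₀ (by positivity : (0:ℝ) < n.factorial)] at h1
  linarith [h1]

lemma En_le (α : ℝ) (k : ℕ) {b β ξ : ℝ} (hβ : β = b + k * α) (hξ : 0 < ξ) :
    En α β ξ ≤ k.factorial * ξ ^ b := by
  have h1 : ξ ^ β = ξ ^ b * (ξ ^ α) ^ k := by
    rw [hβ, Real.rpow_add hξ, ← Real.rpow_natCast (ξ ^ α) k, ← Real.rpow_mul hξ.le,
      mul_comm (k : ℝ) α]
  rw [En, h1, mul_assoc, mul_comm ((k:ℕ).factorial : ℝ) (ξ ^ b)]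
  exact mul_le_mul_of_nonneg_left (pow_mul_exp_neg_le k (Real.rpow_nonneg hξ.le α))
    (Real.rpow_nonneg hξ.le b)

lemma abs_En_le (α : ℝ) (k : ℕ) {b β ξ : ℝ} (hβ : β = b + k * α) (hξ : 0 < ξ) :
    |En α β ξ| ≤ k.factorial * ξ ^ b := by
  rw [abs_of_nonneg (En_nonneg α β hξ.le)]; exact En_le α k hβ hξ

lemma En_hasDerivAt (α β b1 b2 : ℝ) {ξ : ℝ} (h1 : b1 = β - 1) (h2 : b2 = β + α - 1)
    (hξ : 0 < ξ) :
    HasDerivAt (En α β) (β * En α b1 ξ - α * En α b2 ξ) ξ := by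
  have hrp : HasDerivAt (fun x : ℝ => x ^ β) (β * ξ ^ (β - 1)) ξ :=
    Real.hasDerivAt_rpow_const (Or.inl hξ.ne')
  have hra : HasDerivAt (fun x : ℝ => x ^ α) (α * ξ ^ (α - 1)) ξ :=
    Real.hasDerivAt_rpow_const (Or.inl hξ.ne')
  have hexp : HasDerivAt (fun x : ℝ => Real.exp (-x ^ α))
      (Real.exp (-ξ ^ α) * -(α * ξ ^ (α - 1))) ξ := (Real.hasDerivAt_exp _).comp ξ hra.neg
  have h := hrp.mul hexp
  refine h.congr_deriv ?_
  have e2 : ξ ^ b2 = ξ ^ β * ξ ^ (α - 1) := by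
    rw [h2, show β + α - 1 = β + (α - 1) by ring, Real.rpow_add hξ]
  simp only [En, h1, e2]
  ring

lemma En_continuousOn (α β : ℝ) : ContinuousOn (En α β) (Ioi 0) := by
  intro ξ hξ
  have h1 : ContinuousAt (fun x : ℝ => x ^ β) ξ :=
    Real.continuousAt_rpow_const ξ β (Or.inl (ne_of_gt hξ))
  have h2 : ContinuousAt (fun x : ℝ => Real.exp (-x ^ α)) ξ :=
    Real.continuous_exp.continuousAt.comp
      (Real.continuousAt_rpow_const ξ α (Or.inl (ne_of_gt hξ))).neg
  exact (h1.mul h2).continuousWithinAt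

lemma En_integrableOn {α : ℝ} (hα0 : 0 < α) (β : ℝ) {ε : ℝ} (hε : 0 < ε) :
    IntegrableOn (En α β) (Ioi ε) := by
  set n : ℕ := ⌈(β + 2) / α⌉₊ with hn
  set M : ℝ := (n.factorial : ℝ) + max (ε ^ (β + 2)) 1 with hM
  have hmax : (0:ℝ) ≤ max (ε ^ (β + 2)) 1 := le_trans zero_le_one (le_max_right _ _)
  have hmaj : ∀ ξ ∈ Ioi ε, ‖En α β ξ‖ ≤ M * ξ ^ (-2 : ℝ) := by
    intro ξ hξ
    have hξ0 : 0 < ξ := hε.trans hξ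
    have key : ξ ^ (β + 2) * Real.exp (-ξ ^ α) ≤ M := by
      rcases le_or_gt 1 ξ with h1 | h1
      · have hble : β + 2 ≤ (n : ℝ) * α := by
          have h := Nat.le_ceil ((β + 2) / α)
          rw [div_le_iff₀ hα0] at h
          exact h
        have h2 : ξ ^ (β + 2) ≤ ξ ^ ((n : ℝ) * α) :=
          Real.rpow_le_rpow_of_exponent_le h1 hble
        have h3 : En α ((n : ℝ) * α) ξ ≤ n.factorial * ξ ^ (0 : ℝ) :=
          En_le α n (by ring) hξ0
        rw [Real.rpow_zero, mul_one] at h3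
        calc ξ ^ (β + 2) * Real.exp (-ξ ^ α)
            ≤ ξ ^ ((n : ℝ) * α) * Real.exp (-ξ ^ α) :=
              mul_le_mul_of_nonneg_right h2 (Real.exp_pos _).le
          _ ≤ n.factorial := h3
          _ ≤ M := le_add_of_nonneg_right hmax
      · have h2 : ξ ^ (β + 2) ≤ max (ε ^ (β + 2)) 1 := by
          rcases le_or_gt 0 (β + 2) with hb | hb
          · exact le_trans (Real.rpow_le_one hξ0.le h1.le hb) (le_max_right _ _)
          · exact le_trans (Real.rpow_le_rpow_of_nonpos hε (le_of_lt hξ) hb.le)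
              (le_max_left _ _)
        calc ξ ^ (β + 2) * Real.exp (-ξ ^ α)
            ≤ max (ε ^ (β + 2)) 1 * 1 :=
              mul_le_mul h2 (Real.exp_le_one_iff.mpr (neg_nonpos.mpr (Real.rpow_nonneg hξ0.le α))) (Real.exp_pos _).le hmax
          _ ≤ M := by rw [mul_one]; exact le_add_of_nonneg_left (by positivity)
    have hsplit : ξ ^ β = ξ ^ (-2 : ℝ) * ξ ^ (β + 2) := by
      rw [← Real.rpow_add hξ0]; ring_nf
    rw [Real.norm_eq_abs, abs_of_nonneg (En_nonneg α β hξ0.le), En, hsplit]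
    calc ξ ^ (-2:ℝ) * ξ ^ (β + 2) * Real.exp (-ξ ^ α)
        = ξ ^ (-2:ℝ) * (ξ ^ (β + 2) * Real.exp (-ξ ^ α)) := by ring
      _ ≤ ξ ^ (-2:ℝ) * M := mul_le_mul_of_nonneg_left key (Real.rpow_nonneg hξ0.le _)
      _ = M * ξ ^ (-2:ℝ) := mul_comm _ _
  have hint : IntegrableOn (fun ξ : ℝ => M * ξ ^ (-2 : ℝ)) (Ioi ε) :=
    (integrableOn_Ioi_rpow_of_lt (by norm_num) hε).const_mul M
  refine Integrable.mono' hint ?_ ?_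
  · exact ((En_continuousOn α β).mono (Ioi_subset_Ioi hε.le)).aestronglyMeasurable
      measurableSet_Ioi
  · exact (ae_restrict_iff' measurableSet_Ioi).mpr (Filter.Eventually.of_forall hmaj)

lemma En_tendsto {α : ℝ} (hα0 : 0 < α) (β : ℝ) : Tendsto (En α β) atTop (𝓝 0) := by
  have h1 : Tendsto (fun t : ℝ => t ^ (β / α) * Real.exp (-1 * t)) atTop (𝓝 0) :=
    tendsto_rpow_mul_exp_neg_mul_atTop_nhds_zero (β / α) 1 one_pos
  have h2 : Tendsto (fun ξ : ℝ => ξ ^ α) atTop atTop := tendsto_rpow_atTop hα0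
  apply (h1.comp h2).congr'
  filter_upwards [eventually_gt_atTop (0:ℝ)] with ξ hξ
  show (ξ ^ α) ^ (β / α) * Real.exp (-1 * ξ ^ α) = En α β ξ
  rw [← Real.rpow_mul hξ.le, mul_div_cancel₀ β hα0.ne', neg_one_mul, En]

lemma comb_bound {c d X Y cc dd MX MY : ℝ} (hc : |c| ≤ cc) (hd : |d| ≤ dd)
    (hX : |X| ≤ MX) (hY : |Y| ≤ MY) : |c * X - d * Y| ≤ cc * MX + dd * MY := by
  have h1 : |c * X - d * Y| ≤ |c| * |X| + |d| * |Y| := by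
    refine le_trans (abs_sub _ _) ?_
    rw [abs_mul, abs_mul]
  have hc0 : 0 ≤ cc := le_trans (abs_nonneg c) hc
  have hd0 : 0 ≤ dd := le_trans (abs_nonneg d) hd
  calc |c * X - d * Y| ≤ |c| * |X| + |d| * |Y| := h1
    _ ≤ cc * MX + dd * MY :=
      add_le_add (mul_le_mul hc hX (abs_nonneg _) hc0) (mul_le_mul hd hY (abs_nonneg _) hd0)



variable {α s : ℝ}

/-- first derivative of `En α s` -/
noncomputable def gg1 (α s ξ : ℝ) : ℝ := s * En α (s-1) ξ - α * En α (s+α-1) ξ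

/-- second derivative -/
noncomputable def gg2 (α s ξ : ℝ) : ℝ :=
  s * ((s-1) * En α (s-2) ξ - α * En α (s+α-2) ξ)
    - α * ((s+α-1) * En α (s+α-2) ξ - α * En α (s+2*α-2) ξ)

/-- third derivative -/
noncomputable def gg3 (α s ξ : ℝ) : ℝ :=
  s * ((s-1) * ((s-2) * En α (s-3) ξ - α * En α (s+α-3) ξ)
      - α * ((s+α-2) * En α (s+α-3) ξ - α * En α (s+2*α-3) ξ))
    - α * ((s+α-1) * ((s+α-2) * En α (s+α-3) ξ - α * En α (s+2*α-3) ξ)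
      - α * ((s+2*α-2) * En α (s+2*α-3) ξ - α * En α (s+3*α-3) ξ))

noncomputable def MM1 (α s ξ : ℝ) : ℝ := 2 * En α (s-1) ξ + 2 * En α (s+α-1) ξ

noncomputable def MM2 (α s ξ : ℝ) : ℝ :=
  4 * En α (s-2) ξ + 10 * En α (s+α-2) ξ + 4 * En α (s+2*α-2) ξ

noncomputable def MM3 (α s ξ : ℝ) : ℝ :=
  8 * En α (s-3) ξ + 28 * En α (s+α-3) ξ + 36 * En α (s+2*α-3) ξ + 8 * En α (s+3*α-3) ξ

lemma gg1_hasDerivAt {ξ : ℝ} (hξ : 0 < ξ) : HasDerivAt (En α s) (gg1 α s ξ) ξ :=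
  En_hasDerivAt α s (s-1) (s+α-1) rfl rfl hξ

lemma gg2_hasDerivAt {ξ : ℝ} (hξ : 0 < ξ) : HasDerivAt (gg1 α s) (gg2 α s ξ) ξ :=
  ((En_hasDerivAt α (s-1) (s-2) (s+α-2) (by ring) (by ring) hξ).const_mul s).sub
    ((En_hasDerivAt α (s+α-1) (s+α-2) (s+2*α-2) (by ring) (by ring) hξ).const_mul α)

lemma gg3_hasDerivAt {ξ : ℝ} (hξ : 0 < ξ) : HasDerivAt (gg2 α s) (gg3 α s ξ) ξ := by
  refine HasDerivAt.sub (HasDerivAt.const_mul s (HasDerivAt.sub ?_ ?_))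
    (HasDerivAt.const_mul α (HasDerivAt.sub ?_ ?_))
  · exact (En_hasDerivAt α (s-2) (s-3) (s+α-3) (by ring) (by ring) hξ).const_mul (s-1)
  · exact (En_hasDerivAt α (s+α-2) (s+α-3) (s+2*α-3) (by ring) (by ring) hξ).const_mul α
  · exact (En_hasDerivAt α (s+α-2) (s+α-3) (s+2*α-3) (by ring) (by ring) hξ).const_mul (s+α-1)
  · exact (En_hasDerivAt α (s+2*α-2) (s+2*α-3) (s+3*α-3) (by ring) (by ring) hξ).const_mul α

section bounds

variable (hα0 : 0 < α) (hα2 : α < 2) (hs0 : 0 < s) (hs2 : s < 2)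
include hα0 hα2 hs0 hs2

lemma abs_gg1_le {ξ : ℝ} (hξ : 0 < ξ) : |gg1 α s ξ| ≤ MM1 α s ξ := by
  have h := comb_bound (c := s) (d := α) (cc := 2) (dd := 2)
    (abs_le.mpr ⟨by linarith, by linarith⟩) (abs_le.mpr ⟨by linarith, by linarith⟩)
    (le_of_eq (abs_of_nonneg (En_nonneg α (s-1) hξ.le)))
    (le_of_eq (abs_of_nonneg (En_nonneg α (s+α-1) hξ.le)))
  simpa [gg1, MM1] using h

lemma abs_gg2_le {ξ : ℝ} (hξ : 0 < ξ) : |gg2 α s ξ| ≤ MM2 α s ξ := by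
  have h1 := comb_bound (c := s-1) (d := α) (cc := 2) (dd := 2)
    (abs_le.mpr ⟨by linarith, by linarith⟩) (abs_le.mpr ⟨by linarith, by linarith⟩)
    (le_of_eq (abs_of_nonneg (En_nonneg α (s-2) hξ.le)))
    (le_of_eq (abs_of_nonneg (En_nonneg α (s+α-2) hξ.le)))
  have h2 := comb_bound (c := s+α-1) (d := α) (cc := 3) (dd := 2)
    (abs_le.mpr ⟨by linarith, by linarith⟩) (abs_le.mpr ⟨by linarith, by linarith⟩)
    (le_of_eq (abs_of_nonneg (En_nonneg α (s+α-2) hξ.le)))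
    (le_of_eq (abs_of_nonneg (En_nonneg α (s+2*α-2) hξ.le)))
  have h := comb_bound (c := s) (d := α) (cc := 2) (dd := 2)
    (abs_le.mpr ⟨by linarith, by linarith⟩) (abs_le.mpr ⟨by linarith, by linarith⟩) h1 h2
  rw [show |gg2 α s ξ| = |s * ((s-1) * En α (s-2) ξ - α * En α (s+α-2) ξ)
      - α * ((s+α-1) * En α (s+α-2) ξ - α * En α (s+2*α-2) ξ)| from rfl] at *
  rw [MM2]; linarith

lemma abs_gg3_le {ξ : ℝ} (hξ : 0 < ξ) : |gg3 α s ξ| ≤ MM3 α s ξ := by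
  have e1 := le_of_eq (abs_of_nonneg (En_nonneg α (s-3) (ξ := ξ) hξ.le))
  have e2 := le_of_eq (abs_of_nonneg (En_nonneg α (s+α-3) (ξ := ξ) hξ.le))
  have e3 := le_of_eq (abs_of_nonneg (En_nonneg α (s+2*α-3) (ξ := ξ) hξ.le))
  have e4 := le_of_eq (abs_of_nonneg (En_nonneg α (s+3*α-3) (ξ := ξ) hξ.le))
  have hC := comb_bound (c := s-2) (d := α) (cc := 2) (dd := 2)
    (abs_le.mpr ⟨by linarith, by linarith⟩) (abs_le.mpr ⟨by linarith, by linarith⟩) e1 e2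
  have hD := comb_bound (c := s+α-2) (d := α) (cc := 2) (dd := 2)
    (abs_le.mpr ⟨by linarith, by linarith⟩) (abs_le.mpr ⟨by linarith, by linarith⟩) e2 e3
  have hF := comb_bound (c := s+2*α-2) (d := α) (cc := 4) (dd := 2)
    (abs_le.mpr ⟨by linarith, by linarith⟩) (abs_le.mpr ⟨by linarith, by linarith⟩) e3 e4
  have hA := comb_bound (c := s-1) (d := α) (cc := 2) (dd := 2)
    (abs_le.mpr ⟨by linarith, by linarith⟩) (abs_le.mpr ⟨by linarith, by linarith⟩) hC hD
  have hB := comb_bound (c := s+α-1) (d := α) (cc := 3) (dd := 2)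
    (abs_le.mpr ⟨by linarith, by linarith⟩) (abs_le.mpr ⟨by linarith, by linarith⟩) hD hF
  have h := comb_bound (c := s) (d := α) (cc := 2) (dd := 2)
    (abs_le.mpr ⟨by linarith, by linarith⟩) (abs_le.mpr ⟨by linarith, by linarith⟩) hA hB
  rw [show |gg3 α s ξ| = |s * ((s-1) * ((s-2) * En α (s-3) ξ - α * En α (s+α-3) ξ)
      - α * ((s+α-2) * En α (s+α-3) ξ - α * En α (s+2*α-3) ξ))
    - α * ((s+α-1) * ((s+α-2) * En α (s+α-3) ξ - α * En α (s+2*α-3) ξ)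
      - α * ((s+2*α-2) * En α (s+2*α-3) ξ - α * En α (s+3*α-3) ξ))| from rfl] at *
  rw [MM3]; linarith

lemma MM1_le {ξ : ℝ} (hξ : 0 < ξ) : MM1 α s ξ ≤ 10 * ξ ^ (s-1) := by
  have h1 := En_le α 0 (b := s-1) (β := s-1) (by push_cast; ring) hξ
  have h2 := En_le α 1 (b := s-1) (β := s+α-1) (by push_cast; ring) hξ
  norm_num [Nat.factorial] at h1 h2
  have hP : 0 ≤ ξ ^ (s-1) := Real.rpow_nonneg hξ.le _
  rw [MM1]; linarith

lemma MM2_le {ξ : ℝ} (hξ : 0 < ξ) : MM2 α s ξ ≤ 100 * ξ ^ (s-2) := by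
  have h1 := En_le α 0 (b := s-2) (β := s-2) (by push_cast; ring) hξ
  have h2 := En_le α 1 (b := s-2) (β := s+α-2) (by push_cast; ring) hξ
  have h3 := En_le α 2 (b := s-2) (β := s+2*α-2) (by push_cast; ring) hξ
  norm_num [Nat.factorial] at h1 h2 h3
  have hP : 0 ≤ ξ ^ (s-2) := Real.rpow_nonneg hξ.le _
  rw [MM2]; linarith

lemma MM3_le {ξ : ℝ} (hξ : 0 < ξ) : MM3 α s ξ ≤ 1000 * ξ ^ (s-3) := by
  have h1 := En_le α 0 (b := s-3) (β := s-3) (by push_cast; ring) hξ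
  have h2 := En_le α 1 (b := s-3) (β := s+α-3) (by push_cast; ring) hξ
  have h3 := En_le α 2 (b := s-3) (β := s+2*α-3) (by push_cast; ring) hξ
  have h4 := En_le α 3 (b := s-3) (β := s+3*α-3) (by push_cast; ring) hξ
  norm_num [Nat.factorial] at h1 h2 h3 h4
  have hP : 0 ≤ ξ ^ (s-3) := Real.rpow_nonneg hξ.le _
  rw [MM3]; linarith

end bounds

lemma MM1_integrableOn (hα0 : 0 < α) {ε : ℝ} (hε : 0 < ε) :
    IntegrableOn (MM1 α s) (Ioi ε) :=
  ((En_integrableOn hα0 _ hε).const_mul 2).add ((En_integrableOn hα0 _ hε).const_mul 2)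

lemma MM2_integrableOn (hα0 : 0 < α) {ε : ℝ} (hε : 0 < ε) :
    IntegrableOn (MM2 α s) (Ioi ε) :=
  (((En_integrableOn hα0 _ hε).const_mul 4).add
    ((En_integrableOn hα0 _ hε).const_mul 10)).add ((En_integrableOn hα0 _ hε).const_mul 4)

lemma MM3_integrableOn (hα0 : 0 < α) {ε : ℝ} (hε : 0 < ε) :
    IntegrableOn (MM3 α s) (Ioi ε) :=
  ((((En_integrableOn hα0 _ hε).const_mul 8).add
    ((En_integrableOn hα0 _ hε).const_mul 28)).add
    ((En_integrableOn hα0 _ hε).const_mul 36)).add ((En_integrableOn hα0 _ hε).const_mul 8)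

lemma MM1_tendsto (hα0 : 0 < α) : Tendsto (MM1 α s) atTop (𝓝 0) := by
  have h := ((En_tendsto hα0 (s-1)).const_mul (2:ℝ)).add
    ((En_tendsto hα0 (s+α-1)).const_mul (2:ℝ))
  simp only [mul_zero, add_zero] at h; exact h

lemma MM2_tendsto (hα0 : 0 < α) : Tendsto (MM2 α s) atTop (𝓝 0) := by
  have h := (((En_tendsto hα0 (s-2)).const_mul (4:ℝ)).add
    ((En_tendsto hα0 (s+α-2)).const_mul (10:ℝ))).add
    ((En_tendsto hα0 (s+2*α-2)).const_mul (4:ℝ))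
  simp only [mul_zero, add_zero] at h; exact h

lemma gg1_continuousOn {ε : ℝ} (hε : 0 < ε) : ContinuousOn (gg1 α s) (Ioi ε) :=
  (continuousOn_const.mul ((En_continuousOn α _).mono (Ioi_subset_Ioi hε.le))).sub
    (continuousOn_const.mul ((En_continuousOn α _).mono (Ioi_subset_Ioi hε.le)))

lemma gg2_continuousOn {ε : ℝ} (hε : 0 < ε) : ContinuousOn (gg2 α s) (Ioi ε) :=
  (continuousOn_const.mul ((continuousOn_const.mul ((En_continuousOn α _).mono
      (Ioi_subset_Ioi hε.le))).sub (continuousOn_const.mul ((En_continuousOn α _).mono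
      (Ioi_subset_Ioi hε.le))))).sub
    (continuousOn_const.mul ((continuousOn_const.mul ((En_continuousOn α _).mono
      (Ioi_subset_Ioi hε.le))).sub (continuousOn_const.mul ((En_continuousOn α _).mono
      (Ioi_subset_Ioi hε.le)))))

lemma gg3_continuousOn {ε : ℝ} (hε : 0 < ε) : ContinuousOn (gg3 α s) (Ioi ε) := by
  have hc : ∀ β : ℝ, ContinuousOn (En α β) (Ioi ε) :=
    fun β => (En_continuousOn α β).mono (Ioi_subset_Ioi hε.le)
  exact (continuousOn_const.mul ((continuousOn_const.mul ((continuousOn_const.mul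
    (hc _)).sub (continuousOn_const.mul (hc _)))).sub (continuousOn_const.mul
    ((continuousOn_const.mul (hc _)).sub (continuousOn_const.mul (hc _)))))).sub
    (continuousOn_const.mul ((continuousOn_const.mul ((continuousOn_const.mul
    (hc _)).sub (continuousOn_const.mul (hc _)))).sub (continuousOn_const.mul
    ((continuousOn_const.mul (hc _)).sub (continuousOn_const.mul (hc _))))))

end GfunAux
/-- `G_s(x) = (1/π) ∫_0^∞ cos(xξ) e^{-ξ^α} ξ^s dξ`, which equals `((-Δ)^{s/2} K_1^α)(x)`. -/
noncomputable def Gfun (α s x : ℝ) : ℝ :=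
  (1 / Real.pi) * ∫ ξ in Set.Ioi (0 : ℝ), Real.cos (x * ξ) * Real.exp (-ξ ^ α) * ξ ^ s

open GfunAux in
/-- For `α, s ∈ (0,2)` there is a constant `C` with `|G_s(x)| ≤ C |x|^{-(s+1)}` for `|x| ≥ 1`. -/
theorem Gfun_decay (α s : ℝ) (hα0 : 0 < α) (hα2 : α < 2) (hs0 : 0 < s) (hs2 : s < 2) :
    ∃ C : ℝ, 0 < C ∧ ∀ x : ℝ, 1 ≤ |x| → |Gfun α s x| ≤ C * |x| ^ (-(s + 1)) := by
  have hπ : (0:ℝ) < 1 / Real.pi := by positivity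
  have h2s : (0:ℝ) < 2 - s := by linarith
  refine ⟨(1 / Real.pi) * (112 + 1000 / (2 - s)), by positivity, ?_⟩
  intro x hx
  set y : ℝ := |x| with hy
  have hy0 : (0:ℝ) < y := lt_of_lt_of_le one_pos hx
  set ε : ℝ := y⁻¹ with hεdef
  have hε : 0 < ε := inv_pos.mpr hy0
  have hεy : ε * y = 1 := inv_mul_cancel₀ hy0.ne'
  -- rewrite the integrand using |x|
  have hcos : ∀ ξ : ℝ, Real.cos (y * ξ) = Real.cos (x * ξ) := by
    intro ξ
    rcases abs_cases x with ⟨h, _⟩ | ⟨h, _⟩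
    · rw [hy, h]
    · rw [hy, h, neg_mul, Real.cos_neg]
  have hG : Gfun α s x = (1 / Real.pi) * ∫ ξ in Ioi (0:ℝ), Real.cos (y * ξ) * En α s ξ := by
    rw [Gfun]
    congr 1
    refine integral_congr_ae (Filter.Eventually.of_forall fun ξ => ?_)
    show Real.cos (x * ξ) * Real.exp (-ξ ^ α) * ξ ^ s = Real.cos (y * ξ) * En α s ξ
    rw [hcos ξ, En]; ring
  -- integrability of all pieces on `Ioi ε`
  have hmeas : ∀ f : ℝ → ℝ, ContinuousOn f (Ioi ε) →
      AEStronglyMeasurable f (volume.restrict (Ioi ε)) :=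
    fun f hf => hf.aestronglyMeasurable measurableSet_Ioi
  have hccos : Continuous fun ξ : ℝ => Real.cos (y * ξ) :=
    Real.continuous_cos.comp (continuous_const.mul continuous_id)
  have hcsin : Continuous fun ξ : ℝ => Real.sin (y * ξ) :=
    Real.continuous_sin.comp (continuous_const.mul continuous_id)
  have hEcont : ContinuousOn (En α s) (Ioi ε) :=
    (En_continuousOn α s).mono (Ioi_subset_Ioi hε.le)
  have hBint : IntegrableOn (fun ξ => Real.cos (y * ξ) * En α s ξ) (Ioi ε) := by
    refine Integrable.mono' (En_integrableOn hα0 s hε)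
      (hmeas _ (hccos.continuousOn.mul hEcont)) ?_
    refine (ae_restrict_iff' measurableSet_Ioi).mpr (Filter.Eventually.of_forall fun ξ hξ => ?_)
    have hξ0 : 0 < ξ := hε.trans hξ
    rw [Real.norm_eq_abs, abs_mul, abs_of_nonneg (En_nonneg α s hξ0.le)]
    exact mul_le_of_le_one_left (En_nonneg α s hξ0.le) (Real.abs_cos_le_one _)
  have hS1int : IntegrableOn (fun ξ => Real.sin (y * ξ) * gg1 α s ξ) (Ioi ε) := by
    refine Integrable.mono' (MM1_integrableOn (s := s) hα0 hε)
      (hmeas _ (hcsin.continuousOn.mul (gg1_continuousOn hε))) ?_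
    refine (ae_restrict_iff' measurableSet_Ioi).mpr (Filter.Eventually.of_forall fun ξ hξ => ?_)
    have hξ0 : 0 < ξ := hε.trans hξ
    rw [Real.norm_eq_abs, abs_mul]
    calc |Real.sin (y * ξ)| * |gg1 α s ξ| ≤ 1 * |gg1 α s ξ| :=
          mul_le_mul_of_nonneg_right (Real.abs_sin_le_one _) (abs_nonneg _)
      _ = |gg1 α s ξ| := one_mul _
      _ ≤ MM1 α s ξ := abs_gg1_le hα0 hα2 hs0 hs2 hξ0
  have hC2int : IntegrableOn (fun ξ => Real.cos (y * ξ) * gg2 α s ξ) (Ioi ε) := by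
    refine Integrable.mono' (MM2_integrableOn (s := s) hα0 hε)
      (hmeas _ (hccos.continuousOn.mul (gg2_continuousOn hε))) ?_
    refine (ae_restrict_iff' measurableSet_Ioi).mpr (Filter.Eventually.of_forall fun ξ hξ => ?_)
    have hξ0 : 0 < ξ := hε.trans hξ
    rw [Real.norm_eq_abs, abs_mul]
    calc |Real.cos (y * ξ)| * |gg2 α s ξ| ≤ 1 * |gg2 α s ξ| :=
          mul_le_mul_of_nonneg_right (Real.abs_cos_le_one _) (abs_nonneg _)
      _ = |gg2 α s ξ| := one_mul _
      _ ≤ MM2 α s ξ := abs_gg2_le hα0 hα2 hs0 hs2 hξ0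
  have hS3int : IntegrableOn (fun ξ => Real.sin (y * ξ) * gg3 α s ξ) (Ioi ε) := by
    refine Integrable.mono' (MM3_integrableOn (s := s) hα0 hε)
      (hmeas _ (hcsin.continuousOn.mul (gg3_continuousOn hε))) ?_
    refine (ae_restrict_iff' measurableSet_Ioi).mpr (Filter.Eventually.of_forall fun ξ hξ => ?_)
    have hξ0 : 0 < ξ := hε.trans hξ
    rw [Real.norm_eq_abs, abs_mul]
    calc |Real.sin (y * ξ)| * |gg3 α s ξ| ≤ 1 * |gg3 α s ξ| :=
          mul_le_mul_of_nonneg_right (Real.abs_sin_le_one _) (abs_nonneg _)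
      _ = |gg3 α s ξ| := one_mul _
      _ ≤ MM3 α s ξ := abs_gg3_le hα0 hα2 hs0 hs2 hξ0
  -- FTC / integration by parts, three times
  have key1 : ∫ ξ in Ioi ε, (y * (Real.cos (y*ξ) * En α s ξ) + Real.sin (y*ξ) * gg1 α s ξ)
      = 0 - Real.sin (y*ε) * En α s ε := by
    refine integral_Ioi_of_hasDerivAt_of_tendsto'
      (f := fun ξ => Real.sin (y*ξ) * En α s ξ) (fun ξ hξ => ?_) ?_ ?_
    · have hξ0 : 0 < ξ := lt_of_lt_of_le hε hξ
      have hsin : HasDerivAt (fun t : ℝ => Real.sin (y*t)) (Real.cos (y*ξ) * y) ξ := by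
        simpa [Function.comp_def] using (Real.hasDerivAt_sin (y*ξ)).comp ξ ((hasDerivAt_id ξ).const_mul y)
      have h := hsin.mul (gg1_hasDerivAt (α := α) (s := s) hξ0)
      refine h.congr_deriv ?_; ring
    · exact (hBint.const_mul y).add hS1int
    · refine squeeze_zero_norm' ?_ (En_tendsto hα0 s)
      filter_upwards [eventually_gt_atTop (0:ℝ)] with ξ hξ0
      rw [Real.norm_eq_abs, abs_mul]
      calc |Real.sin (y*ξ)| * |En α s ξ| ≤ 1 * |En α s ξ| :=
            mul_le_mul_of_nonneg_right (Real.abs_sin_le_one _) (abs_nonneg _)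
        _ = En α s ξ := by rw [one_mul, abs_of_nonneg (En_nonneg α s hξ0.le)]
  have key2 : ∫ ξ in Ioi ε, (-y * (Real.sin (y*ξ) * gg1 α s ξ) + Real.cos (y*ξ) * gg2 α s ξ)
      = 0 - Real.cos (y*ε) * gg1 α s ε := by
    refine integral_Ioi_of_hasDerivAt_of_tendsto'
      (f := fun ξ => Real.cos (y*ξ) * gg1 α s ξ) (fun ξ hξ => ?_) ?_ ?_
    · have hξ0 : 0 < ξ := lt_of_lt_of_le hε hξ
      have hcosd : HasDerivAt (fun t : ℝ => Real.cos (y*t)) (-Real.sin (y*ξ) * y) ξ := by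
        simpa [Function.comp_def] using (Real.hasDerivAt_cos (y*ξ)).comp ξ ((hasDerivAt_id ξ).const_mul y)
      have h := hcosd.mul (gg2_hasDerivAt (α := α) (s := s) hξ0)
      refine h.congr_deriv ?_; ring
    · exact (hS1int.const_mul (-y)).add hC2int
    · refine squeeze_zero_norm' ?_ (MM1_tendsto (s := s) hα0)
      filter_upwards [eventually_gt_atTop (0:ℝ)] with ξ hξ0
      rw [Real.norm_eq_abs, abs_mul]
      calc |Real.cos (y*ξ)| * |gg1 α s ξ| ≤ 1 * |gg1 α s ξ| :=
            mul_le_mul_of_nonneg_right (Real.abs_cos_le_one _) (abs_nonneg _)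
        _ = |gg1 α s ξ| := one_mul _
        _ ≤ MM1 α s ξ := abs_gg1_le hα0 hα2 hs0 hs2 hξ0
  have key3 : ∫ ξ in Ioi ε, (y * (Real.cos (y*ξ) * gg2 α s ξ) + Real.sin (y*ξ) * gg3 α s ξ)
      = 0 - Real.sin (y*ε) * gg2 α s ε := by
    refine integral_Ioi_of_hasDerivAt_of_tendsto'
      (f := fun ξ => Real.sin (y*ξ) * gg2 α s ξ) (fun ξ hξ => ?_) ?_ ?_
    · have hξ0 : 0 < ξ := lt_of_lt_of_le hε hξ
      have hsin : HasDerivAt (fun t : ℝ => Real.sin (y*t)) (Real.cos (y*ξ) * y) ξ := by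
        simpa [Function.comp_def] using (Real.hasDerivAt_sin (y*ξ)).comp ξ ((hasDerivAt_id ξ).const_mul y)
      have h := hsin.mul (gg3_hasDerivAt (α := α) (s := s) hξ0)
      refine h.congr_deriv ?_; ring
    · exact (hC2int.const_mul y).add hS3int
    · refine squeeze_zero_norm' ?_ (MM2_tendsto (s := s) hα0)
      filter_upwards [eventually_gt_atTop (0:ℝ)] with ξ hξ0
      rw [Real.norm_eq_abs, abs_mul]
      calc |Real.sin (y*ξ)| * |gg2 α s ξ| ≤ 1 * |gg2 α s ξ| :=
            mul_le_mul_of_nonneg_right (Real.abs_sin_le_one _) (abs_nonneg _)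
        _ = |gg2 α s ξ| := one_mul _
        _ ≤ MM2 α s ξ := abs_gg2_le hα0 hα2 hs0 hs2 hξ0
  rw [integral_add (hBint.const_mul y) hS1int, integral_const_mul, zero_sub] at key1
  rw [integral_add (hS1int.const_mul (-y)) hC2int, integral_const_mul, zero_sub] at key2
  rw [integral_add (hC2int.const_mul y) hS3int, integral_const_mul, zero_sub] at key3
  set B : ℝ := ∫ ξ in Ioi ε, Real.cos (y*ξ) * En α s ξ with hBdef
  set S1 : ℝ := ∫ ξ in Ioi ε, Real.sin (y*ξ) * gg1 α s ξ with hS1def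
  set C2 : ℝ := ∫ ξ in Ioi ε, Real.cos (y*ξ) * gg2 α s ξ with hC2def
  set S3 : ℝ := ∫ ξ in Ioi ε, Real.sin (y*ξ) * gg3 α s ξ with hS3def
  -- endpoint bounds
  have hEε : En α s ε ≤ ε ^ s := by
    have h := En_le α 0 (b := s) (β := s) (by push_cast; ring) hε
    norm_num [Nat.factorial] at h; exact h
  have hg1ε : |gg1 α s ε| ≤ 10 * ε ^ (s-1) :=
    (abs_gg1_le hα0 hα2 hs0 hs2 hε).trans (MM1_le hα0 hα2 hs0 hs2 hε)
  have hg2ε : |gg2 α s ε| ≤ 100 * ε ^ (s-2) :=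
    (abs_gg2_le hα0 hα2 hs0 hs2 hε).trans (MM2_le hα0 hα2 hs0 hs2 hε)
  -- tail bound
  have hS3b : |S3| ≤ 1000 * (ε ^ (s-2) / (2-s)) := by
    have hbint : Integrable (fun ξ : ℝ => 1000 * ξ ^ (s-3)) (volume.restrict (Ioi ε)) :=
      (integrableOn_Ioi_rpow_of_lt (by linarith) hε).const_mul 1000
    have hle : ∀ᵐ ξ ∂(volume.restrict (Ioi ε)),
        ‖Real.sin (y*ξ) * gg3 α s ξ‖ ≤ 1000 * ξ ^ (s-3) := by
      refine (ae_restrict_iff' measurableSet_Ioi).mpr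
        (Filter.Eventually.of_forall fun ξ hξ => ?_)
      have hξ0 : 0 < ξ := hε.trans hξ
      rw [Real.norm_eq_abs, abs_mul]
      calc |Real.sin (y*ξ)| * |gg3 α s ξ| ≤ 1 * |gg3 α s ξ| :=
            mul_le_mul_of_nonneg_right (Real.abs_sin_le_one _) (abs_nonneg _)
        _ = |gg3 α s ξ| := one_mul _
        _ ≤ MM3 α s ξ := abs_gg3_le hα0 hα2 hs0 hs2 hξ0
        _ ≤ 1000 * ξ ^ (s-3) := MM3_le hα0 hα2 hs0 hs2 hξ0
    have h := norm_integral_le_of_norm_le hbint hle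
    rw [Real.norm_eq_abs] at h
    refine h.trans ?_
    rw [integral_const_mul, integral_Ioi_rpow_of_lt (by linarith) hε,
      show s - 3 + 1 = s - 2 by ring]
    have hdiv : -ε ^ (s-2) / (s-2) = ε ^ (s-2) / (2-s) := by
      rw [show (2:ℝ)-s = -(s-2) by ring, div_neg, neg_div]
    rw [hdiv]
  -- solve the linear system
  have f1 : y * |B| ≤ ε ^ s + |S1| := by
    have h : y * B = -(Real.sin (y*ε) * En α s ε) - S1 := by linarith [key1]
    calc y * |B| = |y * B| := by rw [abs_mul, abs_of_nonneg hy0.le]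
      _ = |(-(Real.sin (y*ε) * En α s ε)) - S1| := by rw [h]
      _ ≤ |(-(Real.sin (y*ε) * En α s ε))| + |S1| := abs_sub _ _
      _ ≤ ε ^ s + |S1| := by
          refine add_le_add ?_ le_rfl
          rw [abs_neg, abs_mul]
          calc |Real.sin (y*ε)| * |En α s ε| ≤ 1 * |En α s ε| :=
                mul_le_mul_of_nonneg_right (Real.abs_sin_le_one _) (abs_nonneg _)
            _ = En α s ε := by rw [one_mul, abs_of_nonneg (En_nonneg α s hε.le)]
            _ ≤ ε ^ s := hEε
  have f2 : y * |S1| ≤ |C2| + 10 * ε ^ (s-1) := by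
    have h : y * S1 = C2 + Real.cos (y*ε) * gg1 α s ε := by linarith [key2]
    calc y * |S1| = |y * S1| := by rw [abs_mul, abs_of_nonneg hy0.le]
      _ = |C2 + Real.cos (y*ε) * gg1 α s ε| := by rw [h]
      _ ≤ |C2| + |Real.cos (y*ε) * gg1 α s ε| := abs_add_le _ _
      _ ≤ |C2| + 10 * ε ^ (s-1) := by
          refine add_le_add le_rfl ?_
          rw [abs_mul]
          calc |Real.cos (y*ε)| * |gg1 α s ε| ≤ 1 * |gg1 α s ε| :=
                mul_le_mul_of_nonneg_right (Real.abs_cos_le_one _) (abs_nonneg _)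
            _ = |gg1 α s ε| := one_mul _
            _ ≤ 10 * ε ^ (s-1) := hg1ε
  have f3 : y * |C2| ≤ 100 * ε ^ (s-2) + |S3| := by
    have h : y * C2 = -(Real.sin (y*ε) * gg2 α s ε) - S3 := by linarith [key3]
    calc y * |C2| = |y * C2| := by rw [abs_mul, abs_of_nonneg hy0.le]
      _ = |(-(Real.sin (y*ε) * gg2 α s ε)) - S3| := by rw [h]
      _ ≤ |(-(Real.sin (y*ε) * gg2 α s ε))| + |S3| := abs_sub _ _
      _ ≤ 100 * ε ^ (s-2) + |S3| := by
          refine add_le_add ?_ le_rfl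
          rw [abs_neg, abs_mul]
          calc |Real.sin (y*ε)| * |gg2 α s ε| ≤ 1 * |gg2 α s ε| :=
                mul_le_mul_of_nonneg_right (Real.abs_sin_le_one _) (abs_nonneg _)
            _ = |gg2 α s ε| := one_mul _
            _ ≤ 100 * ε ^ (s-2) := hg2ε
  have hεy' : ∀ z : ℝ, z = ε * (y * z) := fun z => by rw [← mul_assoc, hεy, one_mul]
  have hb1 : |B| ≤ ε * (ε ^ s + |S1|) :=
    (le_of_eq (hεy' _)).trans (mul_le_mul_of_nonneg_left f1 hε.le)
  have hb2 : |S1| ≤ ε * (|C2| + 10 * ε ^ (s-1)) :=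
    (le_of_eq (hεy' _)).trans (mul_le_mul_of_nonneg_left f2 hε.le)
  have hb3 : |C2| ≤ ε * (100 * ε ^ (s-2) + |S3|) :=
    (le_of_eq (hεy' _)).trans (mul_le_mul_of_nonneg_left f3 hε.le)
  have e1 : ε * ε ^ s = ε ^ (s+1) := by rw [Real.rpow_add_one hε.ne']; ring
  have e2 : ε * (ε * ε ^ (s-1)) = ε ^ (s+1) := by
    rw [show s+1 = (s-1) + 2 by ring, Real.rpow_add hε, show (2:ℝ) = ((2:ℕ):ℝ) by norm_num,
      Real.rpow_natCast]
    ring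
  have e3 : ε * (ε * (ε * ε ^ (s-2))) = ε ^ (s+1) := by
    rw [show s+1 = (s-2) + 3 by ring, Real.rpow_add hε, show (3:ℝ) = ((3:ℕ):ℝ) by norm_num,
      Real.rpow_natCast]
    ring
  have hBfinal : |B| ≤ ε ^ (s+1) * (111 + 1000 / (2-s)) := by
    have c3 : |C2| ≤ ε * (100 * ε ^ (s-2) + 1000 * (ε ^ (s-2) / (2-s))) :=
      hb3.trans (mul_le_mul_of_nonneg_left (add_le_add_right hS3b _) hε.le)
    have c2 : |S1| ≤ ε * ((ε * (100 * ε ^ (s-2) + 1000 * (ε ^ (s-2) / (2-s)))) + 10 * ε ^ (s-1)) :=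
      hb2.trans (mul_le_mul_of_nonneg_left (add_le_add_left c3 _) hε.le)
    have c1 : |B| ≤ ε * (ε ^ s +
        ε * ((ε * (100 * ε ^ (s-2) + 1000 * (ε ^ (s-2) / (2-s)))) + 10 * ε ^ (s-1))) :=
      hb1.trans (mul_le_mul_of_nonneg_left (add_le_add_right c2 _) hε.le)
    refine c1.trans (le_of_eq ?_)
    linear_combination e1 + 10 * e2 + (100 + 1000/(2-s)) * e3
  -- the piece near the origin
  have hptA : ∀ ξ ∈ Ioc (0:ℝ) ε, ‖Real.cos (y*ξ) * En α s ξ‖ ≤ ε ^ s := by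
    intro ξ hξ
    rw [Real.norm_eq_abs, abs_mul]
    have h1 : En α s ξ ≤ ξ ^ s := by
      have h := En_le α 0 (b := s) (β := s) (by push_cast; ring) hξ.1
      norm_num [Nat.factorial] at h; exact h
    calc |Real.cos (y*ξ)| * |En α s ξ| ≤ 1 * |En α s ξ| :=
          mul_le_mul_of_nonneg_right (Real.abs_cos_le_one _) (abs_nonneg _)
      _ = En α s ξ := by rw [one_mul, abs_of_nonneg (En_nonneg α s hξ.1.le)]
      _ ≤ ξ ^ s := h1
      _ ≤ ε ^ s := Real.rpow_le_rpow hξ.1.le hξ.2 hs0.le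
  have hAmeas : AEStronglyMeasurable (fun ξ => Real.cos (y*ξ) * En α s ξ)
      (volume.restrict (Ioc 0 ε)) :=
    (hccos.continuousOn.mul ((En_continuousOn α s).mono Ioc_subset_Ioi_self)).aestronglyMeasurable
      measurableSet_Ioc
  have hAint : IntegrableOn (fun ξ => Real.cos (y*ξ) * En α s ξ) (Ioc 0 ε) :=
    Integrable.mono' (integrableOn_const measure_Ioc_lt_top.ne) hAmeas
      ((ae_restrict_iff' measurableSet_Ioc).mpr (Filter.Eventually.of_forall hptA))
  have hAbound : |∫ ξ in Ioc (0:ℝ) ε, Real.cos (y*ξ) * En α s ξ| ≤ ε ^ s * ε := by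
    have h := norm_setIntegral_le_of_norm_le_const (μ := volume) (s := Ioc (0:ℝ) ε)
      measure_Ioc_lt_top hptA
    rw [Real.norm_eq_abs, Real.volume_real_Ioc_of_le hε.le, sub_zero] at h
    exact h
  have hsplit : ∫ ξ in Ioi (0:ℝ), Real.cos (y*ξ) * En α s ξ
      = (∫ ξ in Ioc (0:ℝ) ε, Real.cos (y*ξ) * En α s ξ) + B := by
    rw [hBdef, ← setIntegral_union (Ioc_disjoint_Ioi le_rfl) measurableSet_Ioi hAint hBint,
      Ioc_union_Ioi_eq_Ioi hε.le]
  have hIb : |∫ ξ in Ioi (0:ℝ), Real.cos (y*ξ) * En α s ξ| ≤ ε ^ (s+1) * (112 + 1000/(2-s)) := by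
    rw [hsplit]
    calc |(∫ ξ in Ioc (0:ℝ) ε, Real.cos (y*ξ) * En α s ξ) + B|
        ≤ |∫ ξ in Ioc (0:ℝ) ε, Real.cos (y*ξ) * En α s ξ| + |B| := abs_add_le _ _
      _ ≤ ε ^ s * ε + ε ^ (s+1) * (111 + 1000/(2-s)) := add_le_add hAbound hBfinal
      _ = ε ^ (s+1) * (112 + 1000/(2-s)) := by linear_combination e1
  have hεs : ε ^ (s+1) = y ^ (-(s+1)) := by
    rw [hεdef, Real.inv_rpow hy0.le, ← Real.rpow_neg hy0.le]
  rw [hG, abs_mul, abs_of_nonneg hπ.le]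
  calc (1/Real.pi) * |∫ ξ in Ioi (0:ℝ), Real.cos (y*ξ) * En α s ξ|
      ≤ (1/Real.pi) * (ε ^ (s+1) * (112 + 1000/(2-s))) := mul_le_mul_of_nonneg_left hIb hπ.le
    _ = (1/Real.pi) * (112 + 1000/(2-s)) * y ^ (-(s+1)) := by rw [← hεs]; ring
end

section
/- Let α ∈ (0,2) and s ∈ (0,2). Define H_s(x) = (1/π) ∫_0^∞ sin(xξ) e^{-ξ^α} ξ^{s+1} dξ (so that ((-Δ)^{s/2} ∂_x K_1^α)(x) = -H_s(x)). Then there exists a constant C (depending on α and s) such that |H_s(x)| ≤ C |x|^{-(s+2)} for all x with |x| ≥ 1. -/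
open MeasureTheory Real Set Filter
open scoped Topology

/-- `H_s(x) = (1/π) ∫_0^∞ sin(xξ) e^{-ξ^α} ξ^{s+1} dξ`, so that
`((-Δ)^{s/2} ∂_x K_1^α)(x) = -H_s(x)`. -/
noncomputable def Hfun (α s x : ℝ) : ℝ :=
  (1 / Real.pi) * ∫ ξ in Set.Ioi (0 : ℝ), Real.sin (x * ξ) * Real.exp (-ξ ^ α) * ξ ^ (s + 1)

namespace HfunAux


lemma cov_integral {F : Type*} [NormedAddCommGroup F] [NormedSpace ℝ F] (g : ℝ → F) :
    ∫ ξ in Set.Ioi (0:ℝ), g ξ = ∫ u : ℝ, Real.exp u • g (Real.exp u) := by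
  have h := integral_image_eq_integral_abs_deriv_smul (f := Real.exp) (f' := Real.exp)
    MeasurableSet.univ (fun x _ => (Real.hasDerivAt_exp x).hasDerivWithinAt)
    (Real.exp_injective.injOn) g
  rw [image_univ, Real.range_exp] at h
  rw [h, setIntegral_univ]
  congr 1; funext u; rw [abs_of_pos (Real.exp_pos u)]

lemma cov_integrable {F : Type*} [NormedAddCommGroup F] [NormedSpace ℝ F] (g : ℝ → F) :
    IntegrableOn g (Set.Ioi (0:ℝ)) ↔ Integrable (fun u : ℝ => Real.exp u • g (Real.exp u)) := by
  have h := integrableOn_image_iff_integrableOn_abs_deriv_smul (f := Real.exp) (f' := Real.exp)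
    MeasurableSet.univ (fun x _ => (Real.hasDerivAt_exp x).hasDerivWithinAt)
    (Real.exp_injective.injOn) g
  rw [image_univ, Real.range_exp] at h
  rw [h, integrableOn_univ]
  constructor <;> intro h2 <;> apply h2.congr <;> filter_upwards with u <;>
    rw [abs_of_pos (Real.exp_pos u)]

lemma gamma_type {p c : ℝ} (hp : 0 < p) (hc : 0 < c) :
    IntegrableOn (fun ξ : ℝ => Real.exp (-(c * ξ)) * ξ ^ (p - 1)) (Set.Ioi (0:ℝ)) := by
  have h0 := Real.GammaIntegral_convergent hp
  have h := (integrableOn_Ioi_comp_mul_left_iff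
      (fun x : ℝ => Real.exp (-x) * x ^ (p - 1)) 0 hc).mpr (by simpa using h0)
  have h2 : IntegrableOn
      (fun x : ℝ => c ^ (1-p) * (Real.exp (-(c*x)) * (c*x) ^ (p-1))) (Set.Ioi (0:ℝ)) :=
    h.const_mul _
  apply h2.congr_fun ?_ measurableSet_Ioi
  intro x hx
  simp only []
  rw [Real.mul_rpow hc.le (le_of_lt hx)]
  rw [show c ^ (1-p) * (Real.exp (-(c*x)) * (c ^ (p-1) * x ^ (p-1)))
      = (c ^ (1-p) * c ^ (p-1)) * (Real.exp (-(c*x)) * x ^ (p-1)) by ring,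
    ← Real.rpow_add hc]
  norm_num

lemma core_int {p c k : ℝ} (hp : 0 < p) (hc : 0 < c) (hk : 0 < k) :
    Integrable (fun u : ℝ => Real.exp (p * u - c * Real.exp (k * u))) := by
  have base : ∀ q : ℝ, 0 < q →
      Integrable (fun u : ℝ => Real.exp (q * u - c * Real.exp u)) := by
    intro q hq
    have h := (cov_integrable (fun ξ : ℝ => Real.exp (-(c * ξ)) * ξ ^ (q - 1))).mp
      (gamma_type hq hc)
    apply h.congr
    filter_upwards with u
    rw [smul_eq_mul, show (Real.exp u) ^ (q-1) = Real.exp (u * (q-1)) from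
      (Real.exp_mul u (q-1)).symm, ← Real.exp_add, ← Real.exp_add]
    congr 1; ring
  have h2 := (base (p/k) (div_pos hp hk)).comp_mul_left' (ne_of_gt hk)
  apply h2.congr
  filter_upwards with u
  congr 1
  rw [div_mul_eq_mul_div, mul_comm k u, mul_div_assoc, mul_div_assoc,
    div_self (ne_of_gt hk), mul_one]

lemma quad_le_exp {y : ℝ} (hy : 0 ≤ y) : y^2/4 ≤ Real.exp y := by
  have h1 : 0 ≤ y/2 := by linarith
  have h2 : y/2 ≤ Real.exp (y/2) := by
    have := Real.add_one_le_exp (y/2); linarith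
  have h3 : (y/2)^2 ≤ (Real.exp (y/2))^2 := by
    apply pow_le_pow_left₀ h1 h2
  rw [sq, sq, ← Real.exp_add, add_halves] at h3
  nlinarith [h3]


noncomputable def Fc (α s x : ℝ) (w : ℂ) : ℂ :=
  Complex.exp ((x:ℂ) * Complex.I * Complex.exp w - Complex.exp ((α:ℂ) * w) + ((s:ℂ) + 2) * w)

lemma Fc_diff (α s x : ℝ) : Differentiable ℂ (Fc α s x) := by
  apply Differentiable.cexp
  fun_prop

lemma Fc_norm (α s x u v : ℝ) :
    ‖Fc α s x ((u:ℂ) + (v:ℂ) * Complex.I)‖ =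
      Real.exp (-(x * Real.exp u * Real.sin v) - Real.exp (α * u) * Real.cos (α * v)
        + (s + 2) * u) := by
  rw [Fc, Complex.norm_exp]
  congr 1
  simp [Complex.exp_re, Complex.exp_im, Complex.add_re, Complex.add_im, Complex.mul_re,
    Complex.mul_im, Complex.sub_re, Complex.I_re, Complex.I_im, Complex.ofReal_re,
    Complex.ofReal_im]
  ring

lemma Fc_real (α s x u : ℝ) :
    Real.exp u • (Complex.exp (((x * Real.exp u : ℝ) : ℂ) * Complex.I)
        * ((Real.exp (-(Real.exp u) ^ α) * (Real.exp u) ^ (s+1) : ℝ) : ℂ))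
      = Fc α s x (u : ℂ) := by
  rw [Fc, show (x:ℂ) * Complex.I * Complex.exp (u:ℂ) - Complex.exp ((α:ℂ) * (u:ℂ))
      + ((s:ℂ) + 2) * (u:ℂ)
      = (((x * Real.exp u : ℝ)):ℂ) * Complex.I
        + ((-(Real.exp u) ^ α + (s+2) * u : ℝ) : ℂ) by
    push_cast [← Complex.ofReal_exp]
    rw [show ((Real.exp u)^α : ℝ) = Real.exp (u * α) from (Real.exp_mul u α).symm,
      show ((α:ℂ) * u) = (((u * α : ℝ)):ℂ) by push_cast; ring]
    rw [← Complex.ofReal_exp]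
    ring]
  rw [Complex.exp_add, ← Complex.ofReal_exp (-(Real.exp u) ^ α + (s+2) * u)]
  rw [Real.exp_add, show ((Real.exp u)^(s+1) : ℝ) = Real.exp (u * (s+1)) from
    (Real.exp_mul u (s+1)).symm]
  rw [Complex.real_smul]
  push_cast [← Real.exp_add]
  rw [mul_left_comm, ← Complex.exp_add]
  congr 2
  ring


lemma tendsto_S {p c k : ℝ} (hp : 0 < p) (hc : 0 < c) (hk : 0 < k) :
    Tendsto (fun n : ℕ => Real.exp (p * n - c * Real.exp (k * n))) atTop (𝓝 0) := by
  apply Real.tendsto_exp_atBot.comp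
  have hb : Tendsto (fun n : ℕ => p * (n:ℝ) - c * ((k * n)^2/4)) atTop atBot := by
    have h1 : Tendsto (fun n : ℕ => (n:ℝ)) atTop atTop := tendsto_natCast_atTop_atTop
    have h2 : Tendsto (fun n : ℕ => p - c * k^2 / 4 * (n:ℝ)) atTop atBot := by
      apply tendsto_atBot_add_const_left
      have hneg : Tendsto (fun n : ℕ => (-(c * k^2 / 4)) * (n:ℝ)) atTop atBot :=
        Tendsto.const_mul_atTop_of_neg (neg_lt_zero.mpr (by positivity)) h1
      exact hneg.congr (fun n => by ring)
    have := h1.atTop_mul_atBot₀ h2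
    apply this.congr
    intro n; ring
  apply tendsto_atBot_mono ?_ hb
  intro n
  have h3 : (k * n)^2/4 ≤ Real.exp (k * n) := quad_le_exp (by positivity)
  nlinarith

lemma Hfun_odd (α s x : ℝ) : Hfun α s (-x) = - Hfun α s x := by
  rw [Hfun, Hfun, ← mul_neg, ← integral_neg]
  congr 1
  apply integral_congr_ae
  filter_upwards with ξ
  rw [neg_mul, Real.sin_neg]
  ring

set_option maxHeartbeats 2000000 in

lemma main_pos (α s : ℝ) (hα0 : 0 < α) (hα2 : α < 2) (hs0 : 0 < s) (hs2 : s < 2)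
    {x : ℝ} (hx : 1 ≤ x) :
    |Hfun α s x| ≤ ((1/Real.pi) * (2:ℝ)^(s+2) * ∫ t : ℝ, Real.exp ((s+2)*t - Real.exp t))
      * x ^ (-(s+2)) := by
  have hx0 : 0 < x := lt_of_lt_of_le one_pos hx
  have hπ : (0:ℝ) < Real.pi := Real.pi_pos
  set T0 : ℝ := ∫ t : ℝ, Real.exp ((s+2)*t - Real.exp t) with hT0
  set c0 : ℝ := Real.cos (α * (Real.pi/4)) with hc0def
  have hαπ : α * (Real.pi/4) < Real.pi/2 := by nlinarith
  have hc0 : 0 < c0 := Real.cos_pos_of_mem_Ioo ⟨by nlinarith, hαπ⟩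
  have hsqrt2 : (1:ℝ) ≤ Real.sqrt 2 := by
    rw [show (1:ℝ) = Real.sqrt 1 by simp]
    exact Real.sqrt_le_sqrt (by norm_num)
  set G : ℝ → ℂ := fun ξ => Complex.exp (((x*ξ : ℝ):ℂ) * Complex.I)
      * ((Real.exp (-ξ^α) * ξ^(s+1) : ℝ) : ℂ) with hGdef
  have hG_exp : ∀ u : ℝ, Real.exp u • G (Real.exp u) = Fc α s x (u:ℂ) := fun u => Fc_real α s x u
  have hFcont : Continuous (fun u : ℝ => Fc α s x (u:ℂ)) :=
    (Fc_diff α s x).continuous.comp Complex.continuous_ofReal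
  have hFnorm : ∀ u : ℝ, ‖Fc α s x (u:ℂ)‖ = Real.exp ((s+2)*u - 1 * Real.exp (α*u)) := by
    intro u
    have h := Fc_norm α s x u 0
    simp only [Complex.ofReal_zero, zero_mul, add_zero, Real.sin_zero, Real.cos_zero,
      mul_zero, mul_one] at h
    rw [h]
    congr 1
    ring
  have hFint : Integrable (fun u : ℝ => Fc α s x (u:ℂ)) := by
    apply Integrable.mono' (core_int (by linarith : (0:ℝ) < s + 2) one_pos hα0)
      hFcont.aestronglyMeasurable
    filter_upwards with u
    rw [hFnorm u]
  have hGint : IntegrableOn G (Set.Ioi (0:ℝ)) := by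
    rw [cov_integrable]
    exact hFint.congr (by filter_upwards with u; rw [hG_exp u])
  set bnd : ℝ → ℝ := fun u => Real.exp ((s+2)*u - x/2 * Real.exp u) with hbnd
  have hbndcore := core_int (show (0:ℝ) < s+2 by linarith) (show (0:ℝ) < x/2 by linarith) one_pos
  have hbndint : Integrable bnd := by
    apply hbndcore.congr
    filter_upwards with u
    rw [hbnd]
    simp only [one_mul]
  have hbnd_val : ∫ u : ℝ, bnd u = (2/x)^(s+2) * T0 := by
    have hd : Real.exp (Real.log (2/x)) = 2/x := Real.exp_log (by positivity)
    rw [← integral_add_right_eq_self bnd (Real.log (2/x))]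
    rw [show (fun u : ℝ => bnd (u + Real.log (2/x)))
        = fun u : ℝ => (2/x)^(s+2) * Real.exp ((s+2)*u - Real.exp u) by
      funext u
      rw [hbnd]
      simp only []
      rw [Real.exp_add u (Real.log (2/x)), hd,
        show x/2 * (Real.exp u * (2/x)) = Real.exp u by field_simp,
        show (s+2)*(u + Real.log (2/x)) - Real.exp u
          = Real.log (2/x) * (s+2) + ((s+2)*u - Real.exp u) by ring,
        Real.exp_add, Real.exp_mul, hd]]
    rw [integral_const_mul]
  -- the key estimate via the rectangle contour
  have key : ∀ n : ℕ, 1 ≤ n →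
      ‖∫ u in (-(n:ℝ))..(n:ℝ), Fc α s x (u:ℂ)‖ ≤
        (∫ u : ℝ, bnd u)
        + Real.pi/4 * Real.exp ((s+2)*(n:ℝ) - c0 * Real.exp (α*(n:ℝ)))
        + Real.pi/4 * Real.exp ((s+2)*(-(n:ℝ))) := by
    intro n hn
    have hn1 : (1:ℝ) ≤ (n:ℝ) := by exact_mod_cast hn
    have hab : (-(n:ℝ)) ≤ (n:ℝ) := by linarith
    have key0 := Complex.integral_boundary_rect_eq_zero_of_continuousOn_of_differentiableOn
      (Fc α s x) ((-(n:ℝ)) : ℂ) (((n:ℝ) : ℂ) + ((Real.pi/4 : ℝ) : ℂ) * Complex.I)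
      ((Fc_diff α s x).continuous.continuousOn) ((Fc_diff α s x).differentiableOn)
    simp only [Complex.add_re, Complex.ofReal_re, Complex.mul_re, Complex.I_re, Complex.I_im,
      Complex.ofReal_im, Complex.add_im, Complex.mul_im, mul_zero, zero_mul, mul_one, sub_zero,
      zero_add, add_zero, Complex.ofReal_zero, Complex.ofReal_neg, Complex.neg_re, Complex.neg_im,
      neg_zero, zero_sub, sub_self] at key0
    have hsplit : (∫ u in (-(n:ℝ))..(n:ℝ), Fc α s x (u:ℂ))
        = (∫ u in (-(n:ℝ))..(n:ℝ), Fc α s x ((u:ℂ) + ((Real.pi/4 : ℝ):ℂ) * Complex.I))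
          - Complex.I • (∫ v in (0:ℝ)..(Real.pi/4), Fc α s x (((n:ℝ):ℂ) + (v:ℂ) * Complex.I))
          + Complex.I • (∫ v in (0:ℝ)..(Real.pi/4), Fc α s x ((-(n:ℝ) : ℝ) + (v:ℂ) * Complex.I)) := by
      have : (-(((n:ℝ)):ℂ)) = (((-(n:ℝ) : ℝ)):ℂ) := by push_cast; ring
      rw [← this]
      linear_combination key0
    rw [hsplit]
    have hB : ‖∫ u in (-(n:ℝ))..(n:ℝ), Fc α s x ((u:ℂ) + ((Real.pi/4 : ℝ):ℂ) * Complex.I)‖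
        ≤ ∫ u : ℝ, bnd u := by
      calc ‖∫ u in (-(n:ℝ))..(n:ℝ), Fc α s x ((u:ℂ) + ((Real.pi/4 : ℝ):ℂ) * Complex.I)‖
          ≤ ∫ u in (-(n:ℝ))..(n:ℝ), ‖Fc α s x ((u:ℂ) + ((Real.pi/4 : ℝ):ℂ) * Complex.I)‖ :=
            intervalIntegral.norm_integral_le_integral_norm hab
        _ ≤ ∫ u in (-(n:ℝ))..(n:ℝ), bnd u := by
            apply intervalIntegral.integral_mono_on hab
            · exact ((Fc_diff α s x).continuous.comp (by fun_prop)).norm.intervalIntegrable _ _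
            · exact hbndint.intervalIntegrable
            · intro u hu
              rw [Fc_norm, hbnd]
              apply Real.exp_le_exp.mpr
              have h1 : Real.sin (Real.pi/4) = Real.sqrt 2 / 2 := Real.sin_pi_div_four
              have h2 : 0 < Real.exp u := Real.exp_pos u
              have h3 : 0 ≤ Real.exp (α*u) * Real.cos (α * (Real.pi/4)) := by
                rw [← hc0def]; positivity
              rw [h1]
              nlinarith [mul_nonneg (mul_nonneg hx0.le h2.le)
                (show (0:ℝ) ≤ Real.sqrt 2/2 - 1/2 by linarith)]
        _ ≤ ∫ u : ℝ, bnd u := by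
            rw [intervalIntegral.integral_of_le hab]
            apply setIntegral_le_integral hbndint
            filter_upwards with u
            exact Real.exp_nonneg _
    have hR : ‖∫ v in (0:ℝ)..(Real.pi/4), Fc α s x (((n:ℝ):ℂ) + (v:ℂ) * Complex.I)‖
        ≤ Real.exp ((s+2)*(n:ℝ) - c0 * Real.exp (α*(n:ℝ))) * (Real.pi/4) := by
      have := intervalIntegral.norm_integral_le_of_norm_le_const
        (C := Real.exp ((s+2)*(n:ℝ) - c0 * Real.exp (α*(n:ℝ))))
        (f := fun v => Fc α s x (((n:ℝ):ℂ) + (v:ℂ) * Complex.I)) (a := (0:ℝ)) (b := Real.pi/4) ?_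
      · calc _ ≤ _ := this
          _ = _ := by rw [sub_zero, abs_of_pos (by positivity)]
      · intro v hv
        rw [Set.uIoc_of_le (by positivity)] at hv
        rw [Fc_norm]
        apply Real.exp_le_exp.mpr
        have hv0 : 0 < v := hv.1
        have hv4 : v ≤ Real.pi/4 := hv.2
        have hsin : 0 ≤ Real.sin v :=
          Real.sin_nonneg_of_nonneg_of_le_pi hv0.le (by linarith)
        have hcos : c0 ≤ Real.cos (α * v) := by
          rw [hc0def]
          exact Real.cos_le_cos_of_nonneg_of_le_pi (by positivity) (by nlinarith) (by nlinarith)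
        have he : 0 < Real.exp (α*(n:ℝ)) := Real.exp_pos _
        nlinarith [Real.exp_pos ((n:ℝ)), mul_nonneg (mul_nonneg hx0.le (Real.exp_pos (n:ℝ)).le) hsin]
    have hL : ‖∫ v in (0:ℝ)..(Real.pi/4), Fc α s x ((((-(n:ℝ)) : ℝ):ℂ) + (v:ℂ) * Complex.I)‖
        ≤ Real.exp ((s+2)*(-(n:ℝ))) * (Real.pi/4) := by
      have := intervalIntegral.norm_integral_le_of_norm_le_const
        (C := Real.exp ((s+2)*(-(n:ℝ))))
        (f := fun v => Fc α s x ((((-(n:ℝ)) : ℝ):ℂ) + (v:ℂ) * Complex.I)) (a := (0:ℝ))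
        (b := Real.pi/4) ?_
      · calc _ ≤ _ := this
          _ = _ := by rw [sub_zero, abs_of_pos (by positivity)]
      · intro v hv
        rw [Set.uIoc_of_le (by positivity)] at hv
        rw [Fc_norm]
        apply Real.exp_le_exp.mpr
        have hv0 : 0 < v := hv.1
        have hv4 : v ≤ Real.pi/4 := hv.2
        have hsin : 0 ≤ Real.sin v :=
          Real.sin_nonneg_of_nonneg_of_le_pi hv0.le (by linarith)
        have hcos : 0 ≤ Real.cos (α * v) := by
          apply Real.cos_nonneg_of_mem_Icc
          constructor <;> nlinarith
        nlinarith [Real.exp_pos (-(n:ℝ)), Real.exp_pos (α * -(n:ℝ)),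
          mul_nonneg (mul_nonneg hx0.le (Real.exp_pos (-(n:ℝ))).le) hsin,
          mul_nonneg (Real.exp_pos (α * -(n:ℝ))).le hcos]
    have hnormI : ∀ z : ℂ, ‖Complex.I • z‖ = ‖z‖ := by
      intro z; rw [norm_smul, Complex.norm_I, one_mul]
    refine le_trans (norm_add_le _ _) ?_
    refine le_trans (add_le_add_left (norm_sub_le _ _) _) ?_
    rw [hnormI, hnormI]
    linarith [hB, hR, hL]
  have hlim1 : Tendsto (fun n : ℕ => ∫ u in (-(n:ℝ))..(n:ℝ), Fc α s x (u:ℂ)) atTop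
      (𝓝 (∫ u : ℝ, Fc α s x (u:ℂ))) :=
    intervalIntegral_tendsto_integral hFint
      (tendsto_neg_atTop_atBot.comp tendsto_natCast_atTop_atTop) tendsto_natCast_atTop_atTop
  have hS : Tendsto (fun n : ℕ => Real.pi/4 * Real.exp ((s+2)*(n:ℝ) - c0 * Real.exp (α*(n:ℝ))))
      atTop (𝓝 0) := by
    have h := (tendsto_S (show (0:ℝ) < s+2 by linarith) hc0 hα0).const_mul (Real.pi/4)
    simpa using h
  have hL2 : Tendsto (fun n : ℕ => Real.pi/4 * Real.exp ((s+2)*(-(n:ℝ)))) atTop (𝓝 0) := by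
    have h1 : Tendsto (fun n : ℕ => (s+2)*(-(n:ℝ))) atTop atBot := by
      apply Tendsto.const_mul_atBot (show (0:ℝ) < s+2 by linarith)
      exact tendsto_neg_atTop_atBot.comp tendsto_natCast_atTop_atTop
    have h := (Real.tendsto_exp_atBot.comp h1).const_mul (Real.pi/4)
    simpa using h
  have hbound : ‖∫ u : ℝ, Fc α s x (u:ℂ)‖ ≤ (2/x)^(s+2) * T0 := by
    rw [← hbnd_val]
    have hconv : Tendsto (fun n : ℕ => (∫ u : ℝ, bnd u)
        + Real.pi/4 * Real.exp ((s+2)*(n:ℝ) - c0 * Real.exp (α*(n:ℝ)))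
        + Real.pi/4 * Real.exp ((s+2)*(-(n:ℝ)))) atTop (𝓝 ((∫ u : ℝ, bnd u) + 0 + 0)) :=
      (tendsto_const_nhds.add hS).add hL2
    rw [add_zero, add_zero] at hconv
    exact le_of_tendsto_of_tendsto hlim1.norm hconv
      ((eventually_ge_atTop 1).mono fun n hn => key n hn)
  have hGim : ∀ ξ ∈ Set.Ioi (0:ℝ),
      Real.sin (x*ξ) * Real.exp (-ξ^α) * ξ^(s+1) = (fun ξ => (G ξ).im) ξ := by
    intro ξ _
    rw [hGdef]
    simp only [Complex.mul_im, Complex.exp_ofReal_mul_I_im, Complex.exp_ofReal_mul_I_re,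
      Complex.ofReal_im, Complex.ofReal_re, mul_zero, add_zero]
    ring
  have hHfun : |Hfun α s x| ≤ (1/Real.pi) * ((2/x)^(s+2) * T0) := by
    rw [Hfun]
    rw [abs_mul, abs_of_pos (by positivity : (0:ℝ) < 1/Real.pi)]
    apply mul_le_mul_of_nonneg_left ?_ (by positivity)
    have h1 : ∫ ξ in Set.Ioi (0:ℝ), Real.sin (x*ξ) * Real.exp (-ξ^α) * ξ^(s+1)
        = (∫ ξ in Set.Ioi (0:ℝ), G ξ).im := by
      simp only [← RCLike.im_eq_complex_im]
      rw [← integral_im hGint]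
      refine setIntegral_congr_fun measurableSet_Ioi ?_
      intro ξ hξ
      simp only [RCLike.im_eq_complex_im]
      exact hGim ξ hξ
    rw [h1]
    have h2 : ∫ ξ in Set.Ioi (0:ℝ), G ξ = ∫ u : ℝ, Fc α s x (u:ℂ) := by
      rw [cov_integral G]
      congr 1
      funext u
      exact hG_exp u
    calc |(∫ ξ in Set.Ioi (0:ℝ), G ξ).im| ≤ ‖∫ ξ in Set.Ioi (0:ℝ), G ξ‖ := by
          exact Complex.abs_im_le_norm _
      _ = ‖∫ u : ℝ, Fc α s x (u:ℂ)‖ := by rw [h2]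
      _ ≤ (2/x)^(s+2) * T0 := hbound
  calc |Hfun α s x| ≤ (1/Real.pi) * ((2/x)^(s+2) * T0) := hHfun
    _ = (1/Real.pi) * (2:ℝ)^(s+2) * T0 * x^(-(s+2)) := by
      rw [Real.div_rpow (by norm_num) hx0.le, Real.rpow_neg hx0.le, div_eq_mul_inv]
      ring


end HfunAux

/-- For `α, s ∈ (0,2)` there is a constant `C` with `|H_s(x)| ≤ C |x|^{-(s+2)}` for `|x| ≥ 1`. -/
theorem Hfun_decay (α s : ℝ) (hα0 : 0 < α) (hα2 : α < 2) (hs0 : 0 < s) (hs2 : s < 2) :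
    ∃ C : ℝ, 0 < C ∧ ∀ x : ℝ, 1 ≤ |x| → |Hfun α s x| ≤ C * |x| ^ (-(s + 2)) := by
  set T0 : ℝ := ∫ t : ℝ, Real.exp ((s+2)*t - Real.exp t) with hT0
  have hT0nonneg : 0 ≤ T0 := integral_nonneg fun t => Real.exp_nonneg _
  refine ⟨(1/Real.pi) * (2:ℝ)^(s+2) * T0 + 1, by positivity, ?_⟩
  intro x hx
  have habs : ∀ y : ℝ, 1 ≤ y → |Hfun α s y| ≤ ((1/Real.pi) * (2:ℝ)^(s+2) * T0 + 1) * y ^ (-(s+2)) := by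
    intro y hy
    have h := HfunAux.main_pos α s hα0 hα2 hs0 hs2 hy
    have hpos : 0 < y ^ (-(s+2)) := Real.rpow_pos_of_pos (by linarith) _
    nlinarith [h]
  rcases le_or_gt 0 x with hx0 | hx0
  · have : |x| = x := abs_of_nonneg hx0
    rw [this] at hx ⊢
    exact habs x hx
  · have hxa : |x| = -x := abs_of_neg hx0
    rw [hxa] at hx ⊢
    have : Hfun α s x = - Hfun α s (-x) := by
      rw [show x = -(-x) by ring] ; rw [HfunAux.Hfun_odd] ; ring_nf
    rw [this, abs_neg]
    exact habs (-x) hx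
end

section
/- Let α ∈ (0,2), β > 0 and 0 < ε ≤ m. Let z : ℝ → ℝ be continuously differentiable with bounded derivative and with ε ≤ z(x) ≤ m for all x ∈ ℝ. For r > 0 and x ∈ ℝ define I(z,r,x) = ∫_{|y|>r} ( z(x)^{β+1}/(β+1) + β z(x+y)^{β+1}/(β+1) − z(x) z(x+y)^β ) |y|^{-1-α} dy. Then there exists a constant C (depending only on β, ε, m and α) such that |I(z,r,x)| ≤ C (‖z‖_{L^∞(ℝ)} + ‖z'‖_{L^∞(ℝ)})^2 for all r > 0 and x ∈ ℝ. Moreover I(z,r,x) ≥ 0. -/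
open MeasureTheory Real Set Filter

/-- The quantity
`I(z,r,x) = ∫_{|y|>r} ( z(x)^{β+1}/(β+1) + β z(x+y)^{β+1}/(β+1) − z(x) z(x+y)^β ) |y|^{-1-α} dy`. -/
noncomputable def Iquant (α β : ℝ) (z : ℝ → ℝ) (r x : ℝ) : ℝ :=
  ∫ y in {y : ℝ | r < |y|},
    (z x ^ (β + 1) / (β + 1) + β * z (x + y) ^ (β + 1) / (β + 1)
      - z x * z (x + y) ^ β) / |y| ^ (1 + α)


-- Young / nonnegativity of numerator
lemma aux_nonneg {β : ℝ} (hβ : 0 < β) {a b : ℝ} (ha : 0 < a) (hb : 0 < b) :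
    0 ≤ a ^ (β+1) / (β+1) + β * b ^ (β+1) / (β+1) - a * b ^ β := by
  have hpq : (β+1).HolderConjugate ((β+1)/β) := Real.holderConjugate_iff.mpr ⟨by linarith, by field_simp; ring⟩
  have h := Real.young_inequality_of_nonneg ha.le (Real.rpow_nonneg hb.le β) hpq
  have h2 : (b ^ β) ^ ((β+1)/β) = b ^ (β+1) := by
    rw [← Real.rpow_mul hb.le]
    congr 1
    field_simp
  rw [h2] at h
  have h3 : b ^ (β+1) / ((β+1)/β) = β * b ^ (β+1) / (β+1) := by
    field_simp
  rw [h3] at h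
  linarith

-- Lipschitz bound for rpow on Icc ε m
lemma aux_lip {β ε m : ℝ} (hβ : 0 < β) (hε : 0 < ε) (hεm : ε ≤ m)
    {a b : ℝ} (ha : a ∈ Icc ε m) (hb : b ∈ Icc ε m) :
    |a ^ β - b ^ β| ≤ (β * max (ε ^ (β - 1)) (m ^ (β - 1))) * |a - b| := by
  have hder : ∀ t ∈ Icc ε m, HasDerivWithinAt (fun t : ℝ => t ^ β)
      (β * t ^ (β - 1)) (Icc ε m) t := fun t ht =>
    (Real.hasDerivAt_rpow_const (Or.inl (by linarith [ht.1] : t ≠ 0))).hasDerivWithinAt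
  have hbound : ∀ t ∈ Icc ε m, ‖β * t ^ (β - 1)‖ ≤ β * max (ε ^ (β - 1)) (m ^ (β - 1)) := by
    intro t ht
    have ht0 : 0 < t := lt_of_lt_of_le hε ht.1
    rw [Real.norm_eq_abs, abs_mul, abs_of_pos hβ, abs_of_pos (Real.rpow_pos_of_pos ht0 _)]
    apply mul_le_mul_of_nonneg_left _ hβ.le
    rcases le_or_gt 1 β with h1 | h1
    · exact le_max_of_le_right (Real.rpow_le_rpow ht0.le ht.2 (by linarith))
    · exact le_max_of_le_left (Real.rpow_le_rpow_of_nonpos hε ht.1 (by linarith))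
  have := Convex.norm_image_sub_le_of_norm_hasDerivWithin_le hder hbound (convex_Icc ε m) hb ha
  simpa [Real.norm_eq_abs] using this

lemma aux_bregman {β ε m : ℝ} (hβ : 0 < β) (hε : 0 < ε) (hεm : ε ≤ m)
    {a b : ℝ} (ha : a ∈ Icc ε m) (hb : b ∈ Icc ε m) :
    a ^ (β+1) / (β+1) + β * b ^ (β+1) / (β+1) - a * b ^ β
      ≤ (β * max (ε ^ (β - 1)) (m ^ (β - 1))) * (a - b) ^ 2 := by
  set K := β * max (ε ^ (β - 1)) (m ^ (β - 1)) with hK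
  set g : ℝ → ℝ := fun t => t ^ (β+1) / (β+1) - b ^ β * t with hg
  have hsub : uIcc a b ⊆ Icc ε m := uIcc_subset_Icc ha hb
  have hβ1 : (β : ℝ) + 1 ≠ 0 := by linarith
  have hder : ∀ t ∈ uIcc a b, HasDerivWithinAt g (t ^ β - b ^ β) (uIcc a b) t := by
    intro t ht
    have ht0 : t ≠ 0 := by have := (hsub ht).1; intro h; rw [h] at this; linarith
    have h1 : HasDerivAt (fun t : ℝ => t ^ (β+1)) ((β+1) * t ^ (β+1-1)) t :=
      Real.hasDerivAt_rpow_const (Or.inl ht0)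
    have h2 : HasDerivAt g (((β+1) * t ^ (β+1-1)) / (β+1) - b ^ β * 1) t :=
      (h1.div_const (β+1)).sub ((hasDerivAt_id t).const_mul (b ^ β))
    have : ((β+1) * t ^ (β+1-1)) / (β+1) - b ^ β * 1 = t ^ β - b ^ β := by
      rw [show β + 1 - 1 = β by ring]
      field_simp
    rw [this] at h2
    exact h2.hasDerivWithinAt
  have hbound : ∀ t ∈ uIcc a b, ‖t ^ β - b ^ β‖ ≤ K * |a - b| := by
    intro t ht
    have h1 : |t ^ β - b ^ β| ≤ K * |t - b| := aux_lip hβ hε hεm (hsub ht) hb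
    have h2 : |t - b| ≤ |a - b| := by
      rcases ht with ⟨h3, h4⟩
      have hb1 : min a b ≤ b := min_le_right a b
      have hb2 : b ≤ max a b := le_max_right a b
      have : max a b - min a b = |a - b| := by
        rw [abs_sub_comm]; exact max_sub_min_eq_abs a b
      rw [abs_sub_le_iff]
      constructor <;> linarith [this]
    calc ‖t ^ β - b ^ β‖ ≤ K * |t - b| := h1
      _ ≤ K * |a - b| := by
          apply mul_le_mul_of_nonneg_left h2
          have : (0:ℝ) < ε ^ (β-1) := Real.rpow_pos_of_pos hε _
          positivity
  have hmvt := Convex.norm_image_sub_le_of_norm_hasDerivWithin_le hder hbound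
    (convex_uIcc a b) (right_mem_uIcc) (left_mem_uIcc)
  have key : g a - g b ≤ K * |a - b| * |a - b| := by
    calc g a - g b ≤ |g a - g b| := le_abs_self _
      _ ≤ K * |a - b| * ‖a - b‖ := hmvt
      _ = K * |a - b| * |a - b| := by rw [Real.norm_eq_abs]
  have hb0 : (0:ℝ) < b := lt_of_lt_of_le hε hb.1
  have hgab : g a - g b = a ^ (β+1) / (β+1) + β * b ^ (β+1) / (β+1) - a * b ^ β := by
    have hbb : b ^ β * b = b ^ (β+1) := by
      rw [← Real.rpow_add_one hb0.ne' β]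
    simp only [hg]
    field_simp
    nlinarith [hbb]
  have habs : K * |a - b| * |a - b| = K * (a - b) ^ 2 := by
    rw [mul_assoc, ← abs_mul, ← sq, abs_sq]
  rw [← hgab, ← habs]; exact key

lemma aux_integrable {α : ℝ} (hα0 : 0 < α) (hα2 : α < 2) :
    Integrable (fun y : ℝ => min 1 (y ^ 2) * |y| ^ (-(1+α))) := by
  have hmeas : Measurable (fun y : ℝ => min 1 (y ^ 2) * |y| ^ (-(1+α))) :=
    (measurable_const.min (measurable_id.pow_const 2)).mul ((measurable_abs).pow_const _)
  have hI1 : IntegrableOn (fun y : ℝ => y ^ (1-α)) (Ioc 0 1) := by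
    have := intervalIntegral.intervalIntegrable_rpow' (r := 1-α) (by linarith) (a := 0) (b := 1)
    rwa [intervalIntegrable_iff_integrableOn_Ioc_of_le zero_le_one] at this
  have hI2 : IntegrableOn (fun y : ℝ => y ^ (-(1+α))) (Ioi 1) :=
    (integrableOn_Ioi_rpow_iff zero_lt_one).2 (by linarith)
  have hA : IntegrableOn (fun y : ℝ => min 1 (y ^ 2) * |y| ^ (-(1+α))) (Ioc 0 1) := by
    apply hI1.mono' (hmeas.aestronglyMeasurable.restrict)
    filter_upwards [ae_restrict_mem measurableSet_Ioc] with y hy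
    have hy0 : 0 < y := hy.1
    rw [Real.norm_eq_abs, abs_of_nonneg (mul_nonneg (le_min zero_le_one (sq_nonneg y))
      (Real.rpow_nonneg (abs_nonneg y) _)), abs_of_pos hy0]
    calc min 1 (y ^ 2) * y ^ (-(1+α)) ≤ y ^ 2 * y ^ (-(1+α)) :=
          mul_le_mul_of_nonneg_right (min_le_right _ _) (Real.rpow_nonneg hy0.le _)
      _ = y ^ (1-α) := by
          rw [← Real.rpow_natCast y 2, ← Real.rpow_add hy0]
          norm_num
          ring_nf
  have hB : IntegrableOn (fun y : ℝ => min 1 (y ^ 2) * |y| ^ (-(1+α))) (Ioi 1) := by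
    apply hI2.mono' (hmeas.aestronglyMeasurable.restrict)
    filter_upwards [ae_restrict_mem measurableSet_Ioi] with y hy
    have hy0 : (0:ℝ) < y := lt_trans zero_lt_one hy
    rw [Real.norm_eq_abs, abs_of_nonneg (mul_nonneg (le_min zero_le_one (sq_nonneg y))
      (Real.rpow_nonneg (abs_nonneg y) _)), abs_of_pos hy0]
    calc min 1 (y ^ 2) * y ^ (-(1+α)) ≤ 1 * y ^ (-(1+α)) :=
          mul_le_mul_of_nonneg_right (min_le_left _ _) (Real.rpow_nonneg hy0.le _)
      _ = y ^ (-(1+α)) := one_mul _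
  have hpos : IntegrableOn (fun y : ℝ => min 1 (y ^ 2) * |y| ^ (-(1+α))) (Ioi 0) := by
    rw [← Ioc_union_Ioi_eq_Ioi (zero_le_one (α := ℝ))]
    exact hA.union hB
  have hneg : IntegrableOn (fun y : ℝ => min 1 (y ^ 2) * |y| ^ (-(1+α))) (Iio 0) := by
    rw [← (Measure.measurePreserving_neg (volume : Measure ℝ)).integrableOn_comp_preimage
        (Homeomorph.neg ℝ).measurableEmbedding]
    simpa only [Function.comp_def, neg_sq, abs_neg, neg_preimage, neg_Iio, neg_neg,
      neg_zero] using hpos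
  rw [← integrableOn_univ, ← @Iio_union_Ici _ _ (0 : ℝ), integrableOn_union,
    integrableOn_Ici_iff_integrableOn_Ioi]
  exact ⟨hneg, hpos⟩

set_option maxHeartbeats 1000000 in
/-- For `α ∈ (0,2)`, `β > 0`, `0 < ε ≤ m`, and any `C¹` function `z` with bounded
derivative and `ε ≤ z ≤ m`, there is a constant `C` depending only on `β, ε, m, α` with
`|I(z,r,x)| ≤ C (‖z‖_∞ + ‖z'‖_∞)²` for all `r > 0`, `x ∈ ℝ`; moreover `I(z,r,x) ≥ 0`. -/
theorem Iquant_bounded_nonneg (α β ε m : ℝ) (hα0 : 0 < α) (hα2 : α < 2)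
    (hβ : 0 < β) (hε : 0 < ε) (hεm : ε ≤ m) :
    ∃ C : ℝ, 0 < C ∧
      ∀ (z : ℝ → ℝ) (L : ℝ), ContDiff ℝ 1 z →
        (∀ x, ε ≤ z x ∧ z x ≤ m) → (∀ x, |deriv z x| ≤ L) →
        ∀ r > (0 : ℝ), ∀ x : ℝ,
          |Iquant α β z r x| ≤ C * ((⨆ y, |z y|) + ⨆ y, |deriv z y|) ^ 2 ∧
          0 ≤ Iquant α β z r x := by
  set K := β * max (ε ^ (β - 1)) (m ^ (β - 1)) with hKdef
  have hK : 0 < K := by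
    have h1 : (0:ℝ) < ε ^ (β - 1) := Real.rpow_pos_of_pos hε _
    exact mul_pos hβ (lt_of_lt_of_le h1 (le_max_left _ _))
  have hg_int : Integrable (fun y : ℝ => min 1 (y ^ 2) * |y| ^ (-(1+α))) :=
    aux_integrable hα0 hα2
  have hg_nonneg : ∀ y : ℝ, 0 ≤ min 1 (y ^ 2) * |y| ^ (-(1+α)) :=
    fun y => mul_nonneg (le_min zero_le_one (sq_nonneg y)) (Real.rpow_nonneg (abs_nonneg y) _)
  set M := ∫ y : ℝ, min 1 (y ^ 2) * |y| ^ (-(1+α)) with hMdef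
  have hM : 0 ≤ M := integral_nonneg hg_nonneg
  refine ⟨4 * K * M + 1, by have := mul_nonneg (by linarith : (0:ℝ) ≤ 4 * K) hM; linarith, ?_⟩
  intro z L hz hzm hL r hr x
  have hA : MeasurableSet {y : ℝ | r < |y|} := measurableSet_lt measurable_const measurable_abs
  have hzpos : ∀ u, (0:ℝ) < z u := fun u => lt_of_lt_of_le hε (hzm u).1
  have hfnonneg : ∀ y : ℝ,
      0 ≤ (z x ^ (β + 1) / (β + 1) + β * z (x + y) ^ (β + 1) / (β + 1)
        - z x * z (x + y) ^ β) / |y| ^ (1 + α) :=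
    fun y => div_nonneg (aux_nonneg hβ (hzpos x) (hzpos (x + y)))
      (Real.rpow_nonneg (abs_nonneg y) _)
  have hInonneg : 0 ≤ Iquant α β z r x :=
    setIntegral_nonneg hA (fun y _ => hfnonneg y)
  refine ⟨?_, hInonneg⟩
  -- the sups
  set S := ⨆ y, |z y| with hSdef
  set L' := ⨆ y, |deriv z y| with hLdef
  have hbddS : BddAbove (range fun y => |z y|) :=
    ⟨m, by rintro _ ⟨y, rfl⟩; simpa [abs_of_pos (hzpos y)] using (hzm y).2⟩
  have hSle : ∀ y, |z y| ≤ S := fun y => le_ciSup hbddS y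
  have hbddL : BddAbove (range fun y => |deriv z y|) := ⟨L, by rintro _ ⟨y, rfl⟩; exact hL y⟩
  have hL'le : ∀ y, |deriv z y| ≤ L' := fun y => le_ciSup hbddL y
  have hS0 : 0 ≤ S := (abs_nonneg _).trans (hSle 0)
  have hL'0 : 0 ≤ L' := (abs_nonneg _).trans (hL'le 0)
  set T := S + L' with hTdef
  have hT0 : 0 ≤ T := by positivity
  have hzlip : ∀ u v : ℝ, |z u - z v| ≤ L' * |u - v| := by
    intro u v
    have := Convex.norm_image_sub_le_of_norm_deriv_le (s := (univ : Set ℝ))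
      (fun t _ => (hz.differentiable one_ne_zero).differentiableAt)
      (fun t _ => hL'le t) convex_univ (mem_univ v) (mem_univ u)
    simpa [Real.norm_eq_abs] using this
  -- pointwise bound on the set
  have key : ∀ y ∈ {y : ℝ | r < |y|},
      ‖(z x ^ (β + 1) / (β + 1) + β * z (x + y) ^ (β + 1) / (β + 1)
        - z x * z (x + y) ^ β) / |y| ^ (1 + α)‖
      ≤ (4 * K * T ^ 2) * (min 1 (y ^ 2) * |y| ^ (-(1+α))) := by
    intro y hy
    have hyr : r < |y| := hy
    have hy0 : (0:ℝ) < |y| := lt_trans hr hyr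
    have hden : (0:ℝ) < |y| ^ (1 + α) := Real.rpow_pos_of_pos hy0 _
    set d := z x - z (x + y) with hd
    have hd1 : |d| ≤ L' * |y| := by
      have := hzlip x (x + y)
      simpa [abs_sub_comm] using this
    have hd2 : |d| ≤ 2 * S := by
      calc |d| ≤ |z x| + |z (x + y)| := abs_sub _ _
        _ ≤ S + S := add_le_add (hSle x) (hSle (x + y))
        _ = 2 * S := by ring
    have hdsq : d ^ 2 ≤ 4 * T ^ 2 * min 1 (y ^ 2) := by
      rcases le_total (y ^ 2) 1 with h1 | h1
      · rw [min_eq_right h1]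
        have h2 : |d| ^ 2 ≤ (L' * |y|) ^ 2 :=
          pow_le_pow_left₀ (abs_nonneg d) hd1 2
        have h3 : (L' * |y|) ^ 2 = L' ^ 2 * y ^ 2 := by
          rw [mul_pow, sq_abs]
        have hLT : L' ^ 2 ≤ 4 * T ^ 2 := by
          nlinarith [hS0, hL'0, mul_nonneg hS0 hL'0, sq_nonneg S]
        have h4 := mul_le_mul_of_nonneg_right hLT (sq_nonneg y)
        nlinarith [sq_abs d]
      · rw [min_eq_left h1]
        have h2 : |d| ^ 2 ≤ (2 * S) ^ 2 := pow_le_pow_left₀ (abs_nonneg d) hd2 2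
        nlinarith [sq_abs d]
    have hnum_le : z x ^ (β + 1) / (β + 1) + β * z (x + y) ^ (β + 1) / (β + 1)
        - z x * z (x + y) ^ β ≤ K * (4 * T ^ 2 * min 1 (y ^ 2)) := by
      calc _ ≤ K * d ^ 2 :=
            aux_bregman hβ hε hεm ⟨(hzm x).1, (hzm x).2⟩ ⟨(hzm (x+y)).1, (hzm (x+y)).2⟩
        _ ≤ K * (4 * T ^ 2 * min 1 (y ^ 2)) := mul_le_mul_of_nonneg_left hdsq hK.le
    rw [Real.norm_eq_abs, abs_of_nonneg (hfnonneg y)]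
    calc (z x ^ (β + 1) / (β + 1) + β * z (x + y) ^ (β + 1) / (β + 1)
          - z x * z (x + y) ^ β) / |y| ^ (1 + α)
        ≤ (K * (4 * T ^ 2 * min 1 (y ^ 2))) / |y| ^ (1 + α) :=
          (div_le_div_iff_of_pos_right hden).2 hnum_le
      _ = (4 * K * T ^ 2) * (min 1 (y ^ 2) * |y| ^ (-(1+α))) := by
          rw [Real.rpow_neg (abs_nonneg y), div_eq_mul_inv]
          ring
  have hbound : ‖Iquant α β z r x‖ ≤
      ∫ y in {y : ℝ | r < |y|}, (4 * K * T ^ 2) * (min 1 (y ^ 2) * |y| ^ (-(1+α))) := by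
    apply norm_integral_le_of_norm_le ((hg_int.const_mul _).integrableOn)
    exact (ae_restrict_iff' hA).2 (ae_of_all _ key)
  rw [Real.norm_eq_abs] at hbound
  have h2 : ∫ y in {y : ℝ | r < |y|}, (4 * K * T ^ 2) * (min 1 (y ^ 2) * |y| ^ (-(1+α)))
      ≤ (4 * K * T ^ 2) * M := by
    rw [MeasureTheory.integral_const_mul]
    apply mul_le_mul_of_nonneg_left _ (by positivity)
    exact setIntegral_le_integral hg_int (ae_of_all _ hg_nonneg)
  have hT2 : 0 ≤ T ^ 2 := sq_nonneg T
  calc |Iquant α β z r x| ≤ (4 * K * T ^ 2) * M := le_trans hbound h2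
    _ ≤ (4 * K * M + 1) * T ^ 2 := by nlinarith
end

section
/- Let W : (0,∞) → ℝ be locally Lipschitz and let g : (0,∞) → [0,∞) be measurable. Suppose that for almost every t > 0 one has W'(t) + W(t)^2 + g(t) W(t) ≤ 0. Then max{W(t), 0} ≤ 1/t for all t > 0. -/
open MeasureTheory Real Set Filter

open Topology

private lemma key_ftc (f : ℝ → ℝ) (K : NNReal) (a b c : ℝ) (hab : a ≤ b)
    (hf : LipschitzWith K f)
    (hd : ∀ᵐ x ∂(volume.restrict (Set.Ioo a b)), ∀ d : ℝ, HasDerivAt f d x → c ≤ d) :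
    c * (b - a) ≤ f b - f a := by
  rcases eq_or_lt_of_le hab with rfl | hab'
  · simp
  set μ := volume.restrict (Set.Ioo a b) with hμ
  have hcont : Continuous f := hf.continuous
  set δ : ℕ → ℝ := fun n => 1 / (n + 1) with hδ
  have hδpos : ∀ n, 0 < δ n := fun n => by positivity
  have hδmul : ∀ n : ℕ, δ n * (n + 1) = 1 := fun n => by
    rw [hδ]; dsimp only; exact one_div_mul_cancel (by positivity)
  set F : ℕ → ℝ → ℝ := fun n x => (f (x + δ n) - f x) * (n + 1) with hF
  have hδ0 : Tendsto δ atTop (𝓝 0) := tendsto_one_div_add_atTop_nhds_zero_nat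
  -- a.e. differentiability
  have hdiffae : ∀ᵐ x ∂μ, DifferentiableAt ℝ f x :=
    ae_restrict_of_ae hf.ae_differentiableAt_real
  have htend : ∀ᵐ x ∂μ, Tendsto (fun n => F n x) atTop (𝓝 (deriv f x)) := by
    filter_upwards [hdiffae] with x hx
    have h1 : HasDerivAt f (deriv f x) x := hx.hasDerivAt
    rw [hasDerivAt_iff_tendsto_slope] at h1
    have h2 : Tendsto (fun n : ℕ => x + δ n) atTop (𝓝[≠] x) := by
      rw [tendsto_nhdsWithin_iff]
      constructor
      · simpa using tendsto_const_nhds.add hδ0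
      · exact Eventually.of_forall fun n => by
          have := hδpos n; simp; linarith
    have h3 := h1.comp h2
    have heq : (fun n => F n x) = (slope f x ∘ fun n => x + δ n) := by
      funext n
      have hinv : (δ n)⁻¹ = (n : ℝ) + 1 := by rw [hδ]; simp [one_div]
      simp only [Function.comp, slope_def_field, add_sub_cancel_left, div_eq_mul_inv, hinv, hF]
    rw [heq]
    exact h3
  have hcle : ∀ᵐ x ∂μ, c ≤ deriv f x := by
    filter_upwards [hd, hdiffae] with x h1 h2
    exact h1 _ h2.hasDerivAt
  have hFbound : ∀ n x, ‖F n x‖ ≤ (K : ℝ) := by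
    intro n x
    have h1 : dist (f (x + δ n)) (f x) ≤ K * dist (x + δ n) x := hf.dist_le_mul _ _
    rw [Real.dist_eq, Real.dist_eq] at h1
    have h2 : |x + δ n - x| = δ n := by
      rw [add_sub_cancel_left, abs_of_pos (hδpos n)]
    rw [h2] at h1
    have h3 : ‖F n x‖ = |f (x + δ n) - f x| * (n + 1) := by
      rw [hF]; simp [abs_mul, abs_of_nonneg (by positivity : (0:ℝ) ≤ (n:ℝ)+1)]
    rw [h3]
    calc |f (x + δ n) - f x| * (n + 1) ≤ (K * δ n) * (n + 1) := by
          apply mul_le_mul_of_nonneg_right h1 (by positivity)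
      _ = K := by rw [mul_assoc, hδmul]; ring
  have hFmeas : ∀ n, AEStronglyMeasurable (F n) μ := fun n =>
    (((hcont.comp (continuous_id.add continuous_const)).sub hcont).mul
      continuous_const).aestronglyMeasurable
  have hμfin : μ Set.univ < ⊤ := by
    rw [hμ, Measure.restrict_apply_univ, Real.volume_Ioo]
    exact ENNReal.ofReal_lt_top
  have hBint : Integrable (fun _ : ℝ => (K : ℝ)) μ := by
    apply integrable_const_iff.2
    right
    exact ⟨hμfin⟩
  have hDCT := MeasureTheory.tendsto_integral_of_dominated_convergence
    (fun _ => (K : ℝ)) hFmeas hBint (fun n => Eventually.of_forall (hFbound n)) htend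
  have hfi : ∀ u v : ℝ, IntervalIntegrable f volume u v := fun u v =>
    hcont.intervalIntegrable u v
  have hint_eq : ∀ n, ∫ x, F n x ∂μ =
      ((∫ x in b..(b + δ n), f x) - ∫ x in a..(a + δ n), f x) * (n + 1) := by
    intro n
    have h1 : ∫ x, F n x ∂μ = ∫ x in a..b, F n x := by
      rw [intervalIntegral.integral_of_le hab, MeasureTheory.integral_Ioc_eq_integral_Ioo]
    have h2 : (∫ x in a..b, F n x)
        = ((∫ x in a..b, f (x + δ n)) - ∫ x in a..b, f x) * ((n : ℝ) + 1) := by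
      have hi2 : IntervalIntegrable (fun x => f (x + δ n)) volume a b :=
        (hcont.comp (continuous_add_right (δ n))).intervalIntegrable a b
      rw [← intervalIntegral.integral_sub hi2 (hfi a b),
        ← intervalIntegral.integral_mul_const]
    have h3 : (∫ x in a..b, f (x + δ n)) = ∫ x in (a + δ n)..(b + δ n), f x :=
      intervalIntegral.integral_comp_add_right f (δ n)
    have h4 : (∫ x in a..(a + δ n), f x) + (∫ x in (a + δ n)..(b + δ n), f x)
        = ∫ x in a..(b + δ n), f x :=
      intervalIntegral.integral_add_adjacent_intervals (hfi _ _) (hfi _ _)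
    have h5 : (∫ x in a..b, f x) + (∫ x in b..(b + δ n), f x) = ∫ x in a..(b + δ n), f x :=
      intervalIntegral.integral_add_adjacent_intervals (hfi _ _) (hfi _ _)
    rw [h1, h2, h3]
    have h6 : (∫ x in (a + δ n)..(b + δ n), f x) - ∫ x in a..b, f x
        = (∫ x in b..(b + δ n), f x) - ∫ x in a..(a + δ n), f x := by linarith
    rw [h6]
  have herr : ∀ (n : ℕ) (t : ℝ),
      |(∫ x in t..(t + δ n), f x) - f t * δ n| ≤ (K : ℝ) * δ n * δ n := by
    intro n t
    have h0 : (∫ x in t..(t + δ n), f x) - f t * δ n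
        = ∫ x in t..(t + δ n), (f x - f t) := by
      rw [intervalIntegral.integral_sub (hfi _ _) intervalIntegrable_const,
        intervalIntegral.integral_const]
      simp [smul_eq_mul]; ring
    rw [h0]
    have hb : ∀ x ∈ Set.uIoc t (t + δ n), ‖f x - f t‖ ≤ (K : ℝ) * δ n := by
      intro x hx
      rw [Set.uIoc_of_le (by linarith [hδpos n])] at hx
      have h1 := hf.dist_le_mul x t
      rw [Real.dist_eq, Real.dist_eq] at h1
      refine h1.trans (mul_le_mul_of_nonneg_left ?_ K.2)
      rw [abs_le]
      constructor
      · linarith [hx.1, hδpos n]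
      · linarith [hx.2]
    have := intervalIntegral.norm_integral_le_of_norm_le_const hb
    rw [add_sub_cancel_left, abs_of_pos (hδpos n)] at this
    exact this
  have hlim2 : Tendsto (fun n => ∫ x, F n x ∂μ) atTop (𝓝 (f b - f a)) := by
    have hbound : ∀ n, ‖(∫ x, F n x ∂μ) - (f b - f a)‖ ≤ 2 * (K : ℝ) * δ n := by
      intro n
      rw [hint_eq n]
      set B := ∫ x in b..(b + δ n), f x
      set A := ∫ x in a..(a + δ n), f x
      have hd1 : (B - A) * ((n : ℝ) + 1) - (f b - f a)
          = (B - f b * δ n) * ((n : ℝ) + 1) - (A - f a * δ n) * ((n : ℝ) + 1) := by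
        linear_combination (f b - f a) * (hδmul n)
      rw [Real.norm_eq_abs, hd1]
      have e1 : |(B - f b * δ n) * ((n : ℝ) + 1)| ≤ (K : ℝ) * δ n := by
        rw [abs_mul, abs_of_nonneg (by positivity : (0:ℝ) ≤ (n : ℝ) + 1)]
        calc |B - f b * δ n| * ((n : ℝ) + 1) ≤ ((K : ℝ) * δ n * δ n) * ((n : ℝ) + 1) :=
            mul_le_mul_of_nonneg_right (herr n b) (by positivity)
          _ = (K : ℝ) * δ n := by
            rw [mul_assoc, hδmul]; ring
      have e2 : |(A - f a * δ n) * ((n : ℝ) + 1)| ≤ (K : ℝ) * δ n := by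
        rw [abs_mul, abs_of_nonneg (by positivity : (0:ℝ) ≤ (n : ℝ) + 1)]
        calc |A - f a * δ n| * ((n : ℝ) + 1) ≤ ((K : ℝ) * δ n * δ n) * ((n : ℝ) + 1) :=
            mul_le_mul_of_nonneg_right (herr n a) (by positivity)
          _ = (K : ℝ) * δ n := by
            rw [mul_assoc, hδmul]; ring
      calc |(B - f b * δ n) * ((n : ℝ) + 1) - (A - f a * δ n) * ((n : ℝ) + 1)|
          ≤ |(B - f b * δ n) * ((n : ℝ) + 1)| + |(A - f a * δ n) * ((n : ℝ) + 1)| :=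
            abs_sub _ _
        _ ≤ 2 * (K : ℝ) * δ n := by linarith
    have h0 : Tendsto (fun n => 2 * (K : ℝ) * δ n) atTop (𝓝 0) := by
      simpa [hδ, one_div] using hδ0.const_mul (2 * (K : ℝ))
    have hsq := squeeze_zero_norm hbound h0
    have h2 := hsq.add (tendsto_const_nhds (x := f b - f a))
    simpa using h2
  have hkey : ∫ x, deriv f x ∂μ = f b - f a := tendsto_nhds_unique hDCT hlim2
  have hdb : ∀ᵐ x ∂μ, ‖deriv f x‖ ≤ (K : ℝ) := by
    filter_upwards [htend] with x hx
    exact le_of_tendsto hx.norm (Eventually.of_forall fun n => hFbound n x)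
  have hder_int : Integrable (deriv f) μ :=
    Integrable.mono' hBint (measurable_deriv f).aestronglyMeasurable hdb
  have hcint : Integrable (fun _ : ℝ => c) μ := by
    apply integrable_const_iff.2
    right
    exact ⟨hμfin⟩
  have hmono := integral_mono_ae hcint hder_int hcle
  rw [hkey] at hmono
  have hcval : (∫ _x, c ∂μ) = c * (b - a) := by
    rw [integral_const, hμ, measureReal_def, Measure.restrict_apply_univ, Real.volume_Ioo,
      ENNReal.toReal_ofReal (by linarith), smul_eq_mul]
    ring
  linarith [hcval ▸ hmono]


private lemma lemB (W g : ℝ → ℝ)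
    (hg_nonneg : ∀ t, 0 ≤ g t)
    (hW : ∀ a b : ℝ, 0 < a → a ≤ b → ∃ K : NNReal, LipschitzOnWith K W (Set.Icc a b))
    (hdiff : ∀ᵐ t ∂(volume.restrict (Set.Ioi (0 : ℝ))),
      ∀ d : ℝ, HasDerivAt W d t → d + (W t) ^ 2 + g t * W t ≤ 0)
    (hWdiff : ∀ᵐ x ∂(volume : Measure ℝ), x ∈ Set.Ioi (0:ℝ) → DifferentiableAt ℝ W x)
    (s t : ℝ) (hs : 0 < s) (hst : s ≤ t) (hpos : ∀ x ∈ Set.Icc s t, 0 < W x) :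
    1 / W s + (t - s) ≤ 1 / W t := by
  obtain ⟨K, hK⟩ := hW s t hs hst
  -- minimum of W on [s,t]
  obtain ⟨x₀, hx₀, hmin⟩ := isCompact_Icc.exists_isMinOn (nonempty_Icc.2 hst) hK.continuousOn
  set m := W x₀ with hm
  have hmpos : 0 < m := hpos x₀ hx₀
  have hmle : ∀ x ∈ Set.Icc s t, m ≤ W x := fun x hx => hmin hx
  -- V = 1/W is Lipschitz on [s,t]
  set V : ℝ → ℝ := fun x => (W x)⁻¹ with hV
  have hVlip : LipschitzOnWith (Real.toNNReal ((K : ℝ) / (m * m))) V (Set.Icc s t) := by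
    apply LipschitzOnWith.of_dist_le'
    intro x hx y hy
    have hWx := hpos x hx
    have hWy := hpos y hy
    have h1 : V x - V y = (W y - W x) / (W x * W y) := by
      simp only [hV]
      field_simp
    rw [Real.dist_eq, Real.dist_eq, h1, abs_div, abs_of_pos (mul_pos hWx hWy)]
    have h2 : |W y - W x| ≤ (K : ℝ) * |x - y| := by
      have h := hK.dist_le_mul y hy x hx
      rw [Real.dist_eq, Real.dist_eq] at h
      exact h.trans_eq (by rw [abs_sub_comm])
    have h3 : m * m ≤ W x * W y :=
      mul_le_mul (hmle x hx) (hmle y hy) hmpos.le hWx.le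
    calc |W y - W x| / (W x * W y) ≤ ((K : ℝ) * |x - y|) / (m * m) :=
        div_le_div₀ (by positivity) h2 (by positivity) h3
      _ = (K : ℝ) / (m * m) * |x - y| := by ring
  -- clamp to [s,t] and extend
  set c : ℝ → ℝ := fun x => max (min x t) s with hc
  have hclip : LipschitzWith 1 c := by
    have := ((LipschitzWith.id (α := ℝ)).min_const t).max_const s
    simpa [hc] using this
  have hcmem : ∀ x, c x ∈ Set.Icc s t := by
    intro x
    rw [Set.mem_Icc]
    exact ⟨le_max_right _ _, max_le (min_le_right _ _) hst⟩
  have hceq : ∀ x ∈ Set.Icc s t, c x = x := by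
    intro x hx
    show max (min x t) s = x
    rw [min_eq_left hx.2, max_eq_left hx.1]
  set f : ℝ → ℝ := fun x => V (c x) with hf
  have hflip : LipschitzWith (Real.toNNReal ((K : ℝ) / (m * m)) * 1) f := by
    rw [← lipschitzOnWith_univ]
    exact hVlip.comp (lipschitzOnWith_univ.2 hclip) fun x _ => hcmem x
  -- the derivative bound for f on (s,t)
  have hIoosub : Set.Ioo s t ⊆ Set.Ioi (0:ℝ) := fun x hx => hs.trans hx.1
  have h1 : ∀ᵐ x ∂(volume.restrict (Set.Ioo s t)),
      ∀ d : ℝ, HasDerivAt W d x → d + (W x) ^ 2 + g x * W x ≤ 0 :=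
    ae_restrict_of_ae_restrict_of_subset hIoosub hdiff
  have h2 : ∀ᵐ x ∂(volume.restrict (Set.Ioo s t)), x ∈ Set.Ioi (0:ℝ) → DifferentiableAt ℝ W x :=
    ae_restrict_of_ae hWdiff
  have hd : ∀ᵐ x ∂(volume.restrict (Set.Ioo s t)), ∀ d : ℝ, HasDerivAt f d x → 1 ≤ d := by
    filter_upwards [h1, h2, ae_restrict_mem measurableSet_Ioo] with x hx1 hx2 hx3
    intro d hdf
    have hWx : 0 < W x := hpos x ⟨hx3.1.le, hx3.2.le⟩
    have hWd : HasDerivAt W (deriv W x) x := (hx2 (hIoosub hx3)).hasDerivAt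
    have hineq := hx1 _ hWd
    have hV' : HasDerivAt (fun y => (W y)⁻¹) (-deriv W x / W x ^ 2) x := hWd.inv hWx.ne'
    have hfeq : f =ᶠ[𝓝 x] fun y => (W y)⁻¹ := by
      filter_upwards [Ioo_mem_nhds hx3.1 hx3.2] with y hy
      show V (c y) = (W y)⁻¹
      rw [hceq y ⟨hy.1.le, hy.2.le⟩]
    have hdf' : HasDerivAt (fun y => (W y)⁻¹) d x := (hfeq.hasDerivAt_iff).1 hdf
    have hdd : d = -deriv W x / W x ^ 2 := hdf'.unique hV'
    rw [hdd, le_div_iff₀ (by positivity)]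
    nlinarith [mul_nonneg (hg_nonneg x) hWx.le]
  have hkey := key_ftc f _ s t 1 hst hflip hd
  have hfs : f s = (W s)⁻¹ := by
    show V (c s) = (W s)⁻¹
    rw [hceq s ⟨le_refl s, hst⟩]
  have hft : f t = (W t)⁻¹ := by
    show V (c t) = (W t)⁻¹
    rw [hceq t ⟨hst, le_refl t⟩]
  rw [hfs, hft, one_mul] at hkey
  rw [one_div, one_div]
  linarith

/-- If `W` is locally Lipschitz on `(0,∞)` and satisfies the differential inequality
`W' + W² + g W ≤ 0` a.e. on `(0,∞)` (at a.e. point where the derivative exists),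
with `g ≥ 0` measurable, then `max{W(t),0} ≤ 1/t` for all `t > 0`. -/
theorem ode_positive_part_bound (W g : ℝ → ℝ)
    (hW : ∀ a b : ℝ, 0 < a → a ≤ b → ∃ K : NNReal, LipschitzOnWith K W (Set.Icc a b))
    (hg_meas : Measurable g) (hg_nonneg : ∀ t, 0 ≤ g t)
    (hdiff : ∀ᵐ t ∂(volume.restrict (Set.Ioi (0 : ℝ))),
      ∀ d : ℝ, HasDerivAt W d t → d + (W t) ^ 2 + g t * W t ≤ 0) :
    ∀ t > (0 : ℝ), max (W t) 0 ≤ 1 / t := by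
  -- a.e. differentiability of W on (0,∞)
  have hWdiff : ∀ᵐ x ∂(volume : Measure ℝ), x ∈ Set.Ioi (0:ℝ) → DifferentiableAt ℝ W x := by
    have hcover : Set.Ioi (0:ℝ) ⊆ ⋃ n : ℕ, Set.Ioo (1/((n:ℝ)+1)) ((n:ℝ)+1) := by
      intro x hx
      simp only [Set.mem_Ioi] at hx
      obtain ⟨n, hn⟩ := exists_nat_gt (max x (1/x))
      have hx1 : x < (n:ℝ) := (le_max_left x (1/x)).trans_lt hn
      have hx2 : 1/x < (n:ℝ) := (le_max_right x (1/x)).trans_lt hn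
      refine Set.mem_iUnion.2 ⟨n, ⟨?_, ?_⟩⟩
      · rw [div_lt_iff₀ (by positivity : (0:ℝ) < (n:ℝ)+1)]
        have h := (div_lt_iff₀ hx).1 (hx2.trans (lt_add_one _))
        linarith
      · linarith
    have hn : ∀ n : ℕ, ∀ᵐ x ∂(volume : Measure ℝ),
        x ∈ Set.Ioo (1/((n:ℝ)+1)) ((n:ℝ)+1) → DifferentiableAt ℝ W x := by
      intro n
      have h1 : (1:ℝ) ≤ (n:ℝ)+1 := by
        have := Nat.cast_nonneg (α := ℝ) n
        linarith
      have h2 : (1:ℝ)/((n:ℝ)+1) ≤ (n:ℝ)+1 := by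
        calc (1:ℝ)/((n:ℝ)+1) ≤ 1 := by
              rw [div_le_one (by positivity)]; exact h1
          _ ≤ (n:ℝ)+1 := h1
      obtain ⟨K, hK⟩ := hW (1/((n:ℝ)+1)) ((n:ℝ)+1) (by positivity) h2
      filter_upwards [hK.ae_differentiableWithinAt_of_mem_real] with x hx hxo
      exact (hx ⟨hxo.1.le, hxo.2.le⟩).differentiableAt (Icc_mem_nhds hxo.1 hxo.2)
    filter_upwards [ae_all_iff.2 hn] with x hx hxIoi
    obtain ⟨i, hi⟩ := Set.mem_iUnion.1 (hcover hxIoi)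
    exact hx i hi
  intro t₀ ht₀
  have h1t : (0:ℝ) < 1 / t₀ := by positivity
  rcases le_or_gt (W t₀) 0 with hle | hpos₀
  · exact max_le (hle.trans h1t.le) h1t.le
  rw [max_eq_left hpos₀.le]
  set P := {s : ℝ | 0 < s ∧ s ≤ t₀ ∧ ∀ x ∈ Set.Icc s t₀, 0 < W x} with hP
  have ht₀P : t₀ ∈ P := by
    refine ⟨ht₀, le_refl _, fun x hx => ?_⟩
    have hxe : x = t₀ := le_antisymm hx.2 hx.1
    rwa [hxe]
  have hPne : P.Nonempty := ⟨t₀, ht₀P⟩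
  have hPbdd : BddBelow P := ⟨0, fun s hs => hs.1.le⟩
  set a := sInf P with ha_def
  have ha0 : 0 ≤ a := le_csInf hPne fun s hs => hs.1.le
  have hat₀ : a ≤ t₀ := csInf_le hPbdd ht₀P
  have hmem : ∀ x, a < x → x ≤ t₀ → x ∈ P := by
    intro x hax hxt
    obtain ⟨s, hsP, hsx⟩ := exists_lt_of_csInf_lt hPne hax
    exact ⟨hsP.1.trans hsx, hxt, fun y hy => hsP.2.2 y ⟨hsx.le.trans hy.1, hy.2⟩⟩
  have hBs : ∀ s ∈ P, 1 / W s + (t₀ - s) ≤ 1 / W t₀ := fun s hs =>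
    lemB W g hg_nonneg hW hdiff hWdiff s t₀ hs.1 hs.2.1 hs.2.2
  have hWlb : ∀ x, a < x → x ≤ t₀ → W t₀ ≤ W x := by
    intro x hax hxt
    have hxP := hmem x hax hxt
    have hb := hBs x hxP
    have hWx : 0 < W x := hxP.2.2 x ⟨le_refl x, hxt⟩
    have h2 : 1 / W x ≤ 1 / W t₀ := by
      have : (0:ℝ) ≤ t₀ - x := by linarith
      linarith
    rw [div_le_div_iff₀ hWx hpos₀] at h2
    linarith
  have ha : a = 0 := by
    by_contra hne
    have ha' : 0 < a := ha0.lt_of_ne (Ne.symm hne)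
    obtain ⟨K, hK⟩ := hW (a/2) t₀ (by linarith) (by linarith)
    have hCont : ContinuousOn W (Set.Icc (a/2) t₀) := hK.continuousOn
    have hCa : ContinuousWithinAt W (Set.Icc (a/2) t₀) a := hCont a ⟨by linarith, hat₀⟩
    have hWa : W t₀ ≤ W a := by
      rcases eq_or_lt_of_le hat₀ with heq | hlt
      · rw [heq]
      · have hsub : Set.Ioc a t₀ ⊆ Set.Icc (a/2) t₀ := fun x hx =>
          ⟨by linarith [hx.1], hx.2⟩
        have hNB : (𝓝[Set.Ioc a t₀] a).NeBot := by
          rw [← mem_closure_iff_nhdsWithin_neBot, closure_Ioc hlt.ne]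
          exact ⟨le_refl a, hat₀⟩
        have hT : Tendsto W (𝓝[Set.Ioc a t₀] a) (𝓝 (W a)) :=
          hCa.mono_left (nhdsWithin_mono a hsub)
        refine ge_of_tendsto hT ?_
        filter_upwards [self_mem_nhdsWithin] with x hx
        exact hWlb x hx.1 hx.2
    have hWapos : 0 < W a := lt_of_lt_of_le hpos₀ hWa
    have hev : ∀ᶠ x in 𝓝[Set.Icc (a/2) t₀] a, 0 < W x := hCa.eventually (eventually_gt_nhds hWapos)
    rw [eventually_nhdsWithin_iff, Metric.eventually_nhds_iff] at hev
    obtain ⟨ε, hε, hball⟩ := hev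
    set s' := max (a - ε/2) (3*a/4) with hs'
    have hs'a : s' < a := by
      rw [hs']
      apply max_lt (by linarith) (by linarith)
    have hs'pos : 0 < s' := lt_of_lt_of_le (by linarith : (0:ℝ) < 3*a/4) (le_max_right _ _)
    have hs'W : ∀ x ∈ Set.Icc s' a, 0 < W x := by
      intro x hx
      have hxd : dist x a < ε := by
        have h1 : a - ε/2 ≤ s' := le_max_left _ _
        rw [Real.dist_eq, abs_sub_lt_iff]
        constructor <;> linarith [hx.1, hx.2]
      exact hball hxd ⟨by
        have := le_max_right (a - ε/2) (3*a/4)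
        have h34 : 3*a/4 ≤ x := le_trans this hx.1
        linarith, hx.2.trans hat₀⟩
    have hs'P : s' ∈ P := by
      refine ⟨hs'pos, by linarith, fun x hx => ?_⟩
      rcases le_or_gt x a with hxa | hax
      · exact hs'W x ⟨hx.1, hxa⟩
      · exact lt_of_lt_of_le hpos₀ (hWlb x hax hx.2)
    have := csInf_le hPbdd hs'P
    rw [← ha_def] at this
    linarith
  -- now conclude
  have hfin : ∀ s, 0 < s → s ≤ t₀ → 1 / W s + (t₀ - s) ≤ 1 / W t₀ := by
    intro s h1 h2
    rcases eq_or_lt_of_le h2 with rfl | h2'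
    · exact hBs s ht₀P
    · exact hBs s (hmem s (by rw [ha]; exact h1) h2)
  by_contra hcon
  push_neg at hcon
  have hq : 1 / W t₀ < t₀ := by
    rw [div_lt_iff₀ hpos₀]
    rw [div_lt_iff₀ ht₀] at hcon
    linarith [mul_comm t₀ (W t₀)]
  set q := 1 / W t₀ with hqdef
  have hqpos : 0 < q := by positivity
  set s := (t₀ - q)/2 with hsdef
  have hspos : 0 < s := by rw [hsdef]; linarith
  have hslt : s ≤ t₀ := by rw [hsdef]; linarith
  have hb := hfin s hspos hslt
  have hWs : 0 < W s := by
    have hsP := hmem s (by rw [ha]; exact hspos) hslt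
    exact hsP.2.2 s ⟨le_refl s, hslt⟩
  have hWsinv : 0 < 1 / W s := by positivity
  have : t₀ - s = (t₀ + q)/2 := by rw [hsdef]; ring
  rw [this] at hb
  linarith
end

section
/- Let q > 1, t > 0 and M > 0. Let u : ℝ → [0,∞) be measurable and integrable with ∫_ℝ u(y) dy = M, and suppose the Oleinik-type condition u(x)^{q-1} − u(y)^{q-1} ≤ (x − y)/t holds for all y < x. Then u(x) ≤ ( (q/(q-1)) M )^{1/q} t^{-1/q} for every x ∈ ℝ. -/
open MeasureTheory Real Set Filter

/-- If `u ≥ 0` is integrable with mass `M` and satisfies the Oleinik-type condition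
`u(x)^{q-1} − u(y)^{q-1} ≤ (x−y)/t` for all `y < x`, then
`u(x) ≤ ((q/(q-1)) M)^{1/q} t^{-1/q}` for every `x`. -/
theorem oleinik_implies_Linfty_bound (q t M : ℝ) (hq : 1 < q) (ht : 0 < t) (hM : 0 < M)
    (u : ℝ → ℝ) (hmeas : Measurable u) (hnonneg : ∀ x, 0 ≤ u x)
    (hint : Integrable u volume) (hmass : ∫ y, u y = M)
    (holeinik : ∀ x y : ℝ, y < x → u x ^ (q - 1) - u y ^ (q - 1) ≤ (x - y) / t) :
    ∀ x : ℝ, u x ≤ (q / (q - 1) * M) ^ (1 / q) * t ^ (-(1 / q)) := by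
  intro x
  have hq1 : 0 < q - 1 := by linarith
  have hq0 : 0 < q := by linarith
  have hRHSpos : 0 < (q / (q - 1) * M) ^ (1 / q) * t ^ (-(1 / q)) := by
    have h1 : 0 < q / (q - 1) * M := by positivity
    exact mul_pos (Real.rpow_pos_of_pos h1 _) (Real.rpow_pos_of_pos ht _)
  set a := u x with ha
  have ha0 : 0 ≤ a := hnonneg x
  rcases eq_or_lt_of_le ha0 with h | hapos
  · rw [← h]; exact hRHSpos.le
  -- interval [c, x]
  set c := x - t * a ^ (q - 1) with hc
  have hca : 0 < t * a ^ (q - 1) := mul_pos ht (Real.rpow_pos_of_pos hapos _)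
  have hcx : c ≤ x := by simp [hc]; linarith
  -- the lower-bound function
  set g : ℝ → ℝ := fun y => (a ^ (q - 1) - (x - y) / t) ^ (1 / (q - 1)) with hg
  -- pointwise bound on Icc c x
  have hpt : ∀ y ∈ Icc c x, g y ≤ u y := by
    intro y hy
    have h1 : (x - y) / t ≤ a ^ (q - 1) := by
      rw [div_le_iff₀ ht]
      have := hy.1
      rw [hc] at this
      nlinarith [Real.rpow_pos_of_pos hapos (q-1)]
    have h0 : 0 ≤ a ^ (q - 1) - (x - y) / t := by linarith
    have key : a ^ (q - 1) - (x - y) / t ≤ u y ^ (q - 1) := by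
      rcases eq_or_lt_of_le hy.2 with h | h
      · simp [h, ha]
      · have := holeinik x y h
        linarith
    calc g y = (a ^ (q - 1) - (x - y) / t) ^ (1 / (q - 1)) := rfl
      _ ≤ (u y ^ (q - 1)) ^ (1 / (q - 1)) :=
          Real.rpow_le_rpow h0 key (by positivity)
      _ = u y := by
          rw [← Real.rpow_mul (hnonneg y), mul_one_div, div_self hq1.ne', Real.rpow_one]
  -- g is continuous
  have hgcont : Continuous g := by
    have hinner : Continuous fun y : ℝ => a ^ (q - 1) - (x - y) / t := by continuity
    exact hinner.rpow_const fun y => Or.inr (by positivity)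
  -- FTC computation of ∫ g on [c, x]
  set F : ℝ → ℝ := fun y => t * ((q - 1) / q) * (a ^ (q - 1) - (x - y) / t) ^ (q / (q - 1))
    with hF
  have hderiv : ∀ y ∈ Set.uIcc c x, HasDerivAt F (g y) y := by
    intro y _
    have h1 : HasDerivAt (fun y : ℝ => a ^ (q - 1) - (x - y) / t) (1 / t) y := by
      have : HasDerivAt (fun y : ℝ => (x - y) / t) (-1 / t) y :=
        ((hasDerivAt_id y).const_sub x).div_const t
      have h2 := this.const_sub (a ^ (q - 1))
      refine h2.congr_deriv ?_
      ring
    have hle1 : (1:ℝ) ≤ q / (q - 1) := by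
      rw [le_div_iff₀ hq1]; linarith
    have h3 := h1.rpow_const (p := q / (q - 1)) (Or.inr hle1)
    have h4 := h3.const_mul (t * ((q - 1) / q))
    refine h4.congr_deriv (Eq.symm ?_)
    have he : q / (q - 1) - 1 = 1 / (q - 1) := by field_simp; ring
    rw [he]
    simp only [hg]
    field_simp
  have hgint : IntervalIntegrable g volume c x := hgcont.intervalIntegrable c x
  have hftc : ∫ y in c..x, g y = F x - F c :=
    intervalIntegral.integral_eq_sub_of_hasDerivAt hderiv hgint
  have hFx : F x = t * ((q - 1) / q) * a ^ q := by
    rw [hF]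
    simp only [sub_self, zero_div, sub_zero]
    rw [← Real.rpow_mul ha0]
    congr 2
    field_simp
  have hFc : F c = 0 := by
    have hinner : a ^ (q - 1) - (x - c) / t = 0 := by rw [hc]; field_simp; ring
    show t * ((q - 1) / q) * (a ^ (q - 1) - (x - c) / t) ^ (q / (q - 1)) = 0
    rw [hinner, Real.zero_rpow (by positivity : q / (q - 1) ≠ 0), mul_zero]
  -- chain of inequalities
  have huint : IntervalIntegrable u volume c x := hint.intervalIntegrable
  have hmono : ∫ y in c..x, g y ≤ ∫ y in c..x, u y :=
    intervalIntegral.integral_mono_on hcx hgint huint hpt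
  have hsub : ∫ y in c..x, u y ≤ M := by
    rw [intervalIntegral.integral_of_le hcx, ← hmass]
    exact setIntegral_le_integral hint (Filter.Eventually.of_forall hnonneg)
  have hkey : t * ((q - 1) / q) * a ^ q ≤ M := by
    rw [← hFx]
    calc F x = F x - F c := by rw [hFc]; ring
      _ = ∫ y in c..x, g y := hftc.symm
      _ ≤ M := le_trans hmono hsub
  -- final algebra
  have haq : a ^ q ≤ q / (q - 1) * M * t⁻¹ := by
    have htq : 0 < t * ((q - 1) / q) := by positivity
    have h2 : a ^ q ≤ M / (t * ((q - 1) / q)) := by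
      rw [le_div_iff₀ htq, mul_comm]; exact hkey
    have h3 : M / (t * ((q - 1) / q)) = q / (q - 1) * M * t⁻¹ := by
      field_simp
    rw [h3] at h2; exact h2
  have step : a = (a ^ q) ^ (1 / q) := by
    rw [← Real.rpow_mul ha0, mul_one_div, div_self hq0.ne', Real.rpow_one]
  rw [step]
  calc (a ^ q) ^ (1/q) ≤ (q / (q - 1) * M * t⁻¹) ^ (1/q) := by
        apply Real.rpow_le_rpow (by positivity) haq (by positivity)
    _ = (q / (q - 1) * M) ^ (1 / q) * t ^ (-(1 / q)) := by
        rw [Real.mul_rpow (by positivity) (by positivity), ← Real.rpow_neg_one t,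
          ← Real.rpow_mul ht.le]
        norm_num
end
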